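/- arXiv:1804.08418 — 4 statements merged into one kernel-verified Lean document; each statement's English description precedes it below -/
import Mathlib

section
/- Let A ∈ ℝ^{m×n} and L ⊆ {1,…,m}. For all b ∈ ℝ^m such that P_{A,b} := {x ∈ ℝ^n : Ax ≤ b} is nonempty and all u ∈ ℝ^n with A_{L^c} u ≤ b_{L^c}, dist(u, P_{A,b}) ≤ H(A|L) · dist_L(b, Au + ℝ^m_+) ≤ H(A|L) · ‖(A_L u − b_L)_+‖. -/
open Matrix Metric
open scoped Classical

/-- `J ⊆ {1,…,m}` is `A`-surjective: `A_J ℝ^n + ℝ^J_+ = ℝ^J`. -/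
def ASurj {m n : ℕ} (A : Matrix (Fin m) (Fin n) ℝ) (J : Set (Fin m)) : Prop :=
  ∀ w : Fin m → ℝ, ∃ x : Fin n → ℝ, ∀ i ∈ J, A.mulVec x i ≤ w i

/-- `H_J(A|L) = max_{y ∈ ℝ^L, ‖y‖ ≤ 1} min{‖x‖ : A_J x ≤ y_J}`, with the
convention `y_j = 0` for `j ∉ L`. -/
noncomputable def HJL {m n : ℕ} (A : Matrix (Fin m) (Fin n) ℝ) (L J : Set (Fin m)) : ℝ :=
  sSup {t | ∃ y : Fin m → ℝ, (∀ i ∉ L, y i = 0) ∧ ‖y‖ ≤ 1 ∧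
    t = sInf {r | ∃ x : Fin n → ℝ, (∀ i ∈ J, A.mulVec x i ≤ y i) ∧ r = ‖x‖}}

/-- The Hoffman constant `H(A|L) = max_{J ∈ S(A)} H_J(A|L)`. -/
noncomputable def HoffAL {m n : ℕ} (A : Matrix (Fin m) (Fin n) ℝ) (L : Set (Fin m)) : ℝ :=
  sSup {t | ∃ J : Set (Fin m), ASurj A J ∧ t = HJL A L J}

/-- The dual norm `‖v‖* = max_{‖x‖ ≤ 1} ⟨v, x⟩`. -/
noncomputable def dualNorm {d : ℕ} (v : Fin d → ℝ) : ℝ :=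
  sSup {t | ∃ x : Fin d → ℝ, ‖x‖ ≤ 1 ∧ t = ∑ i, v i * x i}

/-- `dist_L(b, S) = inf{‖b − y‖ : y ∈ S, (b − y)_{L^c} = 0}`. -/
noncomputable def distL {m : ℕ} (L : Set (Fin m)) (b : Fin m → ℝ)
    (S : Set (Fin m → ℝ)) : ℝ :=
  sInf {r | ∃ y ∈ S, (∀ i ∉ L, b i - y i = 0) ∧ r = ‖b - y‖}



section Farkas

variable {E : Type*} [AddCommGroup E] [Module ℝ E]

lemma carat_cone {p : ℕ} (a : Fin p → E) (μ : Fin p → ℝ) (hμ : ∀ i, 0 ≤ μ i) :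
    ∃ ν : Fin p → ℝ, (∀ i, 0 ≤ ν i) ∧ (∑ i, ν i • a i = ∑ i, μ i • a i) ∧
      LinearIndependent ℝ (fun i : {i : Fin p // ν i ≠ 0} => a i.1) := by
  obtain ⟨k, hk⟩ : ∃ k, (Finset.univ.filter fun i => μ i ≠ 0).card = k := ⟨_, rfl⟩
  induction k using Nat.strong_induction_on generalizing μ with
  | _ k IH =>
  by_cases hind : LinearIndependent ℝ (fun i : {i : Fin p // μ i ≠ 0} => a i.1)
  · exact ⟨μ, hμ, rfl, hind⟩
  obtain ⟨c, hc0, j0, hj0⟩ := Fintype.not_linearIndependent_iff.mp hind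
  have key : ∀ cf : Fin p → ℝ, (∑ i, cf i • a i = 0) → (∀ i, μ i = 0 → cf i = 0) →
      (∃ i, 0 < cf i) →
      ∃ ν : Fin p → ℝ, (∀ i, 0 ≤ ν i) ∧ (∑ i, ν i • a i = ∑ i, μ i • a i) ∧
        LinearIndependent ℝ (fun i : {i : Fin p // ν i ≠ 0} => a i.1) := by
    intro cf hsum hsupp ⟨ip, hip⟩
    set T : Finset (Fin p) := Finset.univ.filter (fun i => 0 < cf i) with hT
    have hTne : T.Nonempty := ⟨ip, by simp [hT, hip]⟩
    obtain ⟨i0, hi0T, hi0min⟩ := Finset.exists_min_image T (fun i => μ i / cf i) hTne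
    have hcfi0 : 0 < cf i0 := by simpa [hT] using hi0T
    set ε : ℝ := μ i0 / cf i0 with hε
    have hε0 : 0 ≤ ε := div_nonneg (hμ i0) hcfi0.le
    set ν : Fin p → ℝ := fun i => μ i - ε * cf i with hν
    have hν0 : ∀ i, 0 ≤ ν i := by
      intro i
      by_cases hp : 0 < cf i
      · have h1 := hi0min i (by simp [hT, hp])
        have h2 : ε * cf i ≤ μ i := by
          rw [hε]
          calc μ i0 / cf i0 * cf i ≤ μ i / cf i * cf i :=
                mul_le_mul_of_nonneg_right h1 hp.le
            _ = μ i := div_mul_cancel₀ _ hp.ne'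
        simp only [hν, sub_nonneg]
        exact h2
      · push_neg at hp
        have : ε * cf i ≤ 0 := mul_nonpos_of_nonneg_of_nonpos hε0 hp
        simp only [hν]
        linarith [hμ i]
    have hsub : ∀ i, ν i ≠ 0 → μ i ≠ 0 := by
      intro i hvi hmi
      exact hvi (by simp [hν, hsupp i hmi, hmi])
    have hνi0 : ν i0 = 0 := by
      simp [hν, hε, div_mul_cancel₀ _ hcfi0.ne']
    have hcard : (Finset.univ.filter fun i => ν i ≠ 0).card <
        (Finset.univ.filter fun i => μ i ≠ 0).card := by
      apply Finset.card_lt_card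
      constructor
      · intro i hi
        simp only [Finset.mem_filter, Finset.mem_univ, true_and] at hi ⊢
        exact hsub i hi
      · intro hcon
        have hi0 : i0 ∈ Finset.univ.filter fun i => μ i ≠ 0 := by
          simp only [Finset.mem_filter, Finset.mem_univ, true_and]
          intro h0
          exact hcfi0.ne' (hsupp i0 h0)
        have := hcon hi0
        simp only [Finset.mem_filter, Finset.mem_univ, true_and] at this
        exact this hνi0
    have hsums : ∑ i, ν i • a i = ∑ i, μ i • a i := by
      simp only [hν, sub_smul, Finset.sum_sub_distrib, mul_smul]
      rw [← Finset.smul_sum, hsum, smul_zero, sub_zero]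
    obtain ⟨ν', h1, h2, h3⟩ := IH _ (hk ▸ hcard) ν hν0 rfl
    exact ⟨ν', h1, h2.trans hsums, h3⟩
  set cf : Fin p → ℝ := fun i => if h : μ i ≠ 0 then c ⟨i, h⟩ else 0 with hcf
  have hsupp : ∀ i, μ i = 0 → cf i = 0 := by
    intro i hi
    simp [hcf, hi]
  have hcfsum : ∑ i, cf i • a i = 0 := by
    have h2 : ∑ i, cf i • a i
        = ∑ i ∈ Finset.univ.filter (fun i => μ i ≠ 0), cf i • a i :=
      (Finset.sum_subset (Finset.filter_subset _ _) (fun x _ hx => by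
        simp only [Finset.mem_filter, Finset.mem_univ, true_and, not_not] at hx
        simp [hsupp x hx])).symm
    have h1 : ∑ i ∈ Finset.univ.filter (fun i => μ i ≠ 0), cf i • a i
        = ∑ i : {i : Fin p // μ i ≠ 0}, cf i.1 • a i.1 :=
      Finset.sum_subtype _ (by simp) _
    rw [h2, h1, ← hc0]
    apply Finset.sum_congr rfl
    intro i _
    congr 1
    simp [hcf, i.2]
  have hcfj0 : cf j0.1 = c j0 := by simp [hcf, j0.2]
  by_cases hpos : ∃ i, 0 < cf i
  · exact key cf hcfsum hsupp hpos
  · push_neg at hpos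
    refine key (fun i => - cf i) (by simp [hcfsum]) (fun i hi => by simp [hsupp i hi]) ?_
    refine ⟨j0.1, ?_⟩
    have : cf j0.1 ≠ 0 := by rw [hcfj0]; exact hj0
    have := lt_of_le_of_ne (hpos j0.1) this
    simpa using this

end Farkas



section Farkas2

variable {E : Type*} [AddCommGroup E] [Module ℝ E]

lemma sum_restrict {p : ℕ} (a : Fin p → E) (S : Set (Fin p)) (f : Fin p → ℝ)
    (hf : ∀ i, i ∉ S → f i = 0) :
    ∑ i : ↥S, f i.1 • a i.1 = ∑ i, f i • a i := by
  rw [← Finset.sum_subtype (Finset.univ.filter (· ∈ S)) (by simp) (fun i => f i • a i)]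
  exact Finset.sum_subset (Finset.filter_subset _ _) (fun x _ hx => by
    simp only [Finset.mem_filter, Finset.mem_univ, true_and] at hx
    simp [hf x hx])

variable {F : Type*} [NormedAddCommGroup F] [NormedSpace ℝ F] [FiniteDimensional ℝ F]

lemma isClosed_coneSet {p : ℕ} (a : Fin p → F) :
    IsClosed {x : F | ∃ μ : Fin p → ℝ, (∀ i, 0 ≤ μ i) ∧ x = ∑ i, μ i • a i} := by
  have main : {x : F | ∃ μ : Fin p → ℝ, (∀ i, 0 ≤ μ i) ∧ x = ∑ i, μ i • a i}
      = ⋃ S ∈ {S : Set (Fin p) | LinearIndependent ℝ (fun i : ↥S => a i.1)},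
          {x : F | ∃ μ : Fin p → ℝ, (∀ i, 0 ≤ μ i) ∧ (∀ i, i ∉ S → μ i = 0) ∧
            x = ∑ i, μ i • a i} := by
    apply Set.Subset.antisymm
    · rintro x ⟨μ, hμ, rfl⟩
      obtain ⟨ν, hν0, hνsum, hνind⟩ := carat_cone a μ hμ
      have hmem : (∑ i, μ i • a i) ∈ {x : F | ∃ μ' : Fin p → ℝ, (∀ i, 0 ≤ μ' i) ∧
          (∀ i, i ∉ ({i | ν i ≠ 0} : Set (Fin p)) → μ' i = 0) ∧ x = ∑ i, μ' i • a i} :=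
        ⟨ν, hν0, fun i hi => by simpa using hi, hνsum.symm⟩
      have hSmem : ({i | ν i ≠ 0} : Set (Fin p)) ∈
          {S : Set (Fin p) | LinearIndependent ℝ fun (i : ↥S) => a i.1} := hνind
      exact Set.mem_biUnion hSmem hmem
    · rintro x hx
      simp only [Set.mem_iUnion] at hx
      obtain ⟨S, _, μ, hμ0, _, rfl⟩ := hx
      exact ⟨μ, hμ0, rfl⟩
  rw [main]
  apply Set.Finite.isClosed_biUnion (Set.toFinite _)
  intro S hS
  simp only [Set.mem_setOf_eq] at hS
  let T : (↥S → ℝ) →ₗ[ℝ] F :=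
    { toFun := fun c => ∑ i : ↥S, c i • a i.1
      map_add' := by intro c d; simp [add_smul, Finset.sum_add_distrib]
      map_smul' := by
        intro r c
        simp [mul_smul, Finset.smul_sum] }
  have hker : LinearMap.ker T = ⊥ := by
    rw [LinearMap.ker_eq_bot']
    intro c hc
    have := Fintype.linearIndependent_iff.mp hS c hc
    funext i
    exact this i
  have hemb := LinearMap.isClosedEmbedding_of_injective hker
  have himg : {x : F | ∃ μ : Fin p → ℝ, (∀ i, 0 ≤ μ i) ∧ (∀ i, i ∉ S → μ i = 0) ∧
      x = ∑ i, μ i • a i} = T '' {c : ↥S → ℝ | ∀ i, 0 ≤ c i} := by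
    apply Set.Subset.antisymm
    · rintro x ⟨μ, hμ0, hμS, rfl⟩
      exact ⟨fun i => μ i.1, fun i => hμ0 i.1, (sum_restrict a S μ hμS)⟩
    · rintro x ⟨c, hc, rfl⟩
      set μ : Fin p → ℝ := fun i => if h : i ∈ S then c ⟨i, h⟩ else 0 with hμ
      refine ⟨μ, fun i => ?_, fun i hi => by simp [hμ, hi], ?_⟩
      · by_cases h : i ∈ S
        · simpa [hμ, h] using hc ⟨i, h⟩
        · simp [hμ, h]
      · rw [← sum_restrict a S μ (fun i hi => by simp [hμ, hi])]
        have heq : (∑ i : ↥S, c i • a i.1) = ∑ i : ↥S, μ i.1 • a i.1 := by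
          apply Finset.sum_congr rfl
          intro i _
          congr 1
          simp [hμ, i.2]
        exact heq
  rw [himg]
  have horth : IsClosed {c : ↥S → ℝ | ∀ i, 0 ≤ c i} := by
    have : {c : ↥S → ℝ | ∀ i, 0 ≤ c i} = ⋂ i, {c : ↥S → ℝ | 0 ≤ c i} := by
      ext c; simp
    rw [this]
    exact isClosed_iInter fun i => isClosed_le continuous_const (continuous_apply i)
  exact hemb.isClosedMap _ horth

end Farkas2

section Farkas3

variable {H : Type*} [NormedAddCommGroup H] [InnerProductSpace ℝ H] [FiniteDimensional ℝ H]

lemma farkas_cone {p : ℕ} (a : Fin p → H) (g : H)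
    (h : ¬ ∃ μ : Fin p → ℝ, (∀ i, 0 ≤ μ i) ∧ g = ∑ i, μ i • a i) :
    ∃ y : H, (∀ i, inner ℝ (a i) y ≤ (0:ℝ)) ∧ (0:ℝ) < inner ℝ g y := by
  set C := {x : H | ∃ μ : Fin p → ℝ, (∀ i, 0 ≤ μ i) ∧ x = ∑ i, μ i • a i} with hC
  let K : ConvexCone ℝ H :=
    { carrier := C
      smul_mem' := by
        rintro t ht x ⟨μ, hμ0, rfl⟩
        exact ⟨fun i => t * μ i, fun i => mul_nonneg ht.le (hμ0 i),
          by simp [mul_smul, Finset.smul_sum]⟩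
      add_mem' := by
        rintro x ⟨μ, hμ0, rfl⟩ y ⟨ν, hν0, rfl⟩
        exact ⟨fun i => μ i + ν i, fun i => add_nonneg (hμ0 i) (hν0 i),
          by simp [add_smul, Finset.sum_add_distrib]⟩ }
  have ne : (K : Set H).Nonempty := ⟨0, ⟨fun _ => 0, fun i => le_rfl, by simp⟩⟩
  have hcl : IsClosed (K : Set H) := isClosed_coneSet a
  have hg : g ∉ K := fun hgK => h hgK
  obtain ⟨y, hy1, hy2⟩ : ∃ y : H, (∀ x ∈ K, 0 ≤ inner ℝ x y) ∧ inner ℝ y g < (0:ℝ) := by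
    obtain ⟨f, u, hfu, hfK⟩ := geometric_hahn_banach_point_closed K.convex hcl hg
    have h0 : (0:H) ∈ K := ⟨fun _ => 0, fun i => le_rfl, by simp⟩
    have hu0 : u < 0 := by simpa using hfK 0 h0
    refine ⟨(InnerProductSpace.toDual ℝ H).symm f, fun x hx => ?_, ?_⟩
    · rw [real_inner_comm, InnerProductSpace.toDual_symm_apply]
      by_contra hneg
      push_neg at hneg
      have ht : 0 < u / f x := div_pos_of_neg_of_neg hu0 hneg
      have := hfK _ (K.smul_mem ht hx)
      rw [map_smul, smul_eq_mul, div_mul_cancel₀ _ hneg.ne] at this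
      exact lt_irrefl _ this
    · rw [InnerProductSpace.toDual_symm_apply]
      linarith
  refine ⟨-y, fun i => ?_, ?_⟩
  · have hai : a i ∈ K := by
      refine ⟨fun j => if j = i then 1 else 0, fun j => by positivity, ?_⟩
      simp [ite_smul]
    have := hy1 _ hai
    rw [inner_neg_right]
    linarith
  · rw [inner_neg_right, real_inner_comm]
    linarith

end Farkas3



section FarkasMatrix

lemma euc_inner {k : ℕ} (x y : EuclideanSpace ℝ (Fin k)) :
    (inner ℝ x y : ℝ) = ∑ i, x i * y i := by
  simp [PiLp.inner_apply, RCLike.inner_apply, conj_trivial]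
  exact Finset.sum_congr rfl fun _ _ => mul_comm _ _

lemma farkas_cone_pi {k p : ℕ} (a : Fin p → (Fin k → ℝ)) (g : Fin k → ℝ)
    (h : ¬ ∃ μ : Fin p → ℝ, (∀ i, 0 ≤ μ i) ∧ g = ∑ i, μ i • a i) :
    ∃ y : Fin k → ℝ, (∀ i, ∑ j, a i j * y j ≤ 0) ∧ 0 < ∑ j, g j * y j := by
  set le := WithLp.linearEquiv 2 ℝ (Fin k → ℝ) with hle
  have h' : ¬ ∃ μ : Fin p → ℝ, (∀ i, 0 ≤ μ i) ∧
      le.symm g = ∑ i, μ i • le.symm (a i) := by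
    rintro ⟨μ, hμ0, hμ⟩
    refine h ⟨μ, hμ0, ?_⟩
    have : le.symm g = le.symm (∑ i, μ i • a i) := by
      rw [hμ]; simp
    exact le.symm.injective this
  obtain ⟨y, h1, h2⟩ := farkas_cone (fun i => le.symm (a i)) (le.symm g) h'
  refine ⟨le y, fun i => ?_, ?_⟩
  · have := h1 i
    rwa [euc_inner] at this
  · rwa [euc_inner] at h2

lemma farkas_affine {m n : ℕ} (A : Matrix (Fin m) (Fin n) ℝ) (b : Fin m → ℝ)
    (hP : ∃ x : Fin n → ℝ, ∀ i, A.mulVec x i ≤ b i) (c : Fin n → ℝ) (d : ℝ)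
    (h : ∀ x : Fin n → ℝ, (∀ i, A.mulVec x i ≤ b i) → ∑ j, c j * x j ≤ d) :
    ∃ μ : Fin m → ℝ, (∀ i, 0 ≤ μ i) ∧ (∀ j, ∑ i, μ i * A i j = c j) ∧
      ∑ i, μ i * b i ≤ d := by
  set a : Fin (m+1) → (Fin (n+1) → ℝ) :=
    fun i => Fin.lastCases (Fin.snoc (0 : Fin n → ℝ) 1)
      (fun i' => Fin.snoc (fun j => A i' j) (b i')) i with ha
  set g : Fin (n+1) → ℝ := Fin.snoc c d with hg
  by_cases hex : ∃ μ' : Fin (m+1) → ℝ, (∀ i, 0 ≤ μ' i) ∧ g = ∑ i, μ' i • a i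
  · obtain ⟨μ', hμ'0, hμ'⟩ := hex
    refine ⟨fun i => μ' i.castSucc, fun i => hμ'0 _, fun j => ?_, ?_⟩
    · have := congrFun hμ' j.castSucc
      rw [Finset.sum_apply, Fin.sum_univ_castSucc] at this
      simp only [hg, ha, Pi.smul_apply, smul_eq_mul, Fin.snoc_castSucc,
        Fin.lastCases_castSucc, Fin.lastCases_last, Pi.zero_apply, mul_zero] at this
      rw [this]
      simp
    · have := congrFun hμ' (Fin.last n)
      rw [Finset.sum_apply, Fin.sum_univ_castSucc] at this
      simp only [hg, ha, Pi.smul_apply, smul_eq_mul, Fin.snoc_last,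
        Fin.lastCases_castSucc, Fin.lastCases_last, mul_one] at this
      rw [this]
      have : 0 ≤ μ' (Fin.last m) := hμ'0 _
      linarith [le_refl (∑ i : Fin m, μ' i.castSucc * b i)]
  · obtain ⟨y, h1, h2⟩ := farkas_cone_pi a g hex
    exfalso
    set xh : Fin n → ℝ := fun j => y j.castSucc with hxh
    set t : ℝ := y (Fin.last n) with ht
    have hrow : ∀ i : Fin m, A.mulVec xh i + b i * t ≤ 0 := by
      intro i
      have := h1 i.castSucc
      rw [Fin.sum_univ_castSucc] at this
      simp only [ha, Fin.lastCases_castSucc, Fin.snoc_castSucc, Fin.snoc_last] at this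
      simpa [Matrix.mulVec, dotProduct, hxh, ht] using this
    have htle : t ≤ 0 := by
      have := h1 (Fin.last m)
      rw [Fin.sum_univ_castSucc] at this
      simp only [ha, Fin.lastCases_last, Fin.snoc_castSucc, Fin.snoc_last,
        Pi.zero_apply, zero_mul, one_mul] at this
      simpa [ht] using this
    have hobj : ∑ j, c j * xh j + d * t > 0 := by
      have h2' := h2
      rw [Fin.sum_univ_castSucc] at h2'
      simpa [hg, Fin.snoc_castSucc, Fin.snoc_last, hxh, ht] using h2'
    rcases lt_or_eq_of_le htle with htlt | hteq
    · set x : Fin n → ℝ := (-t)⁻¹ • xh with hx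
      have hfeas : ∀ i, A.mulVec x i ≤ b i := by
        intro i
        have h0 := hrow i
        have hmt : 0 < -t := by linarith
        rw [hx, Matrix.mulVec_smul]
        have : A.mulVec xh i ≤ b i * (-t) := by linarith
        calc ((-t)⁻¹ • A.mulVec xh) i = (-t)⁻¹ * A.mulVec xh i := rfl
          _ ≤ (-t)⁻¹ * (b i * (-t)) := by
              apply mul_le_mul_of_nonneg_left this (by positivity)
          _ = b i := by
              rw [mul_comm (b i) (-t), ← mul_assoc,
                inv_mul_cancel₀ (by linarith : (-t) ≠ 0), one_mul]
      have hcx := h x hfeas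
      have : ∑ j, c j * x j = (-t)⁻¹ * ∑ j, c j * xh j := by
        rw [Finset.mul_sum]
        apply Finset.sum_congr rfl
        intro j _
        simp [hx]
        ring
      rw [this] at hcx
      have hmt : 0 < -t := by linarith
      have h4 := mul_le_mul_of_nonneg_left hcx hmt.le
      rw [← mul_assoc, mul_inv_cancel₀ (by linarith : (-t) ≠ 0), one_mul] at h4
      nlinarith [hobj]
    · rw [hteq] at hrow hobj
      simp only [mul_zero, add_zero] at hrow hobj
      obtain ⟨z, hz⟩ := hP
      -- z + s • xh is feasible for all s ≥ 0
      have hcxh : 0 < ∑ j, c j * xh j := hobj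
      set s : ℝ := (d - ∑ j, c j * z j) / (∑ j, c j * xh j) + 1 with hs
      have hs0 : 0 ≤ s := by
        have h3 := h z hz
        have : 0 ≤ (d - ∑ j, c j * z j) / (∑ j, c j * xh j) :=
          div_nonneg (by linarith) hcxh.le
        rw [hs]
        linarith
      have hfeas : ∀ i, A.mulVec (z + s • xh) i ≤ b i := by
        intro i
        rw [Matrix.mulVec_add, Matrix.mulVec_smul]
        have := hrow i
        have : s * A.mulVec xh i ≤ 0 := mul_nonpos_of_nonneg_of_nonpos hs0 this
        calc A.mulVec z i + (s • A.mulVec xh) i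
            = A.mulVec z i + s * A.mulVec xh i := rfl
          _ ≤ A.mulVec z i := by linarith
          _ ≤ b i := hz i
      have hval := h _ hfeas
      have hsplit : ∑ j, c j * (z + s • xh) j
          = ∑ j, c j * z j + s * ∑ j, c j * xh j := by
        rw [Finset.mul_sum, ← Finset.sum_add_distrib]
        apply Finset.sum_congr rfl
        intro j _
        simp [Pi.add_apply, Pi.smul_apply]
        ring
      rw [hsplit] at hval
      have : s * ∑ j, c j * xh j = (d - ∑ j, c j * z j) + ∑ j, c j * xh j := by
        rw [hs]
        field_simp
      nlinarith [hcxh]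

end FarkasMatrix



lemma farkas_infeasible {m n : ℕ} (A : Matrix (Fin m) (Fin n) ℝ) (J : Set (Fin m))
    (w : Fin m → ℝ) (h : ¬ ∃ x : Fin n → ℝ, ∀ i ∈ J, A.mulVec x i ≤ w i) :
    ∃ μ : Fin m → ℝ, (∀ i, 0 ≤ μ i) ∧ (∀ i, i ∉ J → μ i = 0) ∧
      (∀ j, ∑ i, μ i * A i j = 0) ∧ ∑ i, μ i * w i < 0 := by
  set a : Fin (m+1) → (Fin (n+1) → ℝ) :=
    fun i => Fin.lastCases (Fin.snoc (0 : Fin n → ℝ) 1)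
      (fun i' => if i' ∈ J then Fin.snoc (fun j => A i' j) (w i') else 0) i with ha
  set g : Fin (n+1) → ℝ := Fin.snoc (0 : Fin n → ℝ) (-1) with hg
  by_cases hex : ∃ μ' : Fin (m+1) → ℝ, (∀ i, 0 ≤ μ' i) ∧ g = ∑ i, μ' i • a i
  · obtain ⟨μ', hμ'0, hμ'⟩ := hex
    set μ : Fin m → ℝ := fun i => if i ∈ J then μ' i.castSucc else 0 with hμ
    have hμ0 : ∀ i, 0 ≤ μ i := by
      intro i
      by_cases hi : i ∈ J <;> simp [hμ, hi, hμ'0 i.castSucc]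
    refine ⟨μ, hμ0, fun i hi => by simp [hμ, hi], fun j => ?_, ?_⟩
    · have := congrFun hμ' j.castSucc
      rw [Finset.sum_apply, Fin.sum_univ_castSucc] at this
      simp only [hg, ha, Pi.smul_apply, smul_eq_mul, Fin.snoc_castSucc,
        Fin.lastCases_castSucc, Fin.lastCases_last, Pi.zero_apply, mul_zero,
        add_zero] at this
      refine (Finset.sum_congr rfl fun i _ => ?_).trans this.symm
      by_cases hi : i ∈ J <;> simp [hμ, hi]
    · have := congrFun hμ' (Fin.last n)
      rw [Finset.sum_apply, Fin.sum_univ_castSucc] at this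
      simp only [hg, ha, Pi.smul_apply, smul_eq_mul, Fin.snoc_last,
        Fin.lastCases_castSucc, Fin.lastCases_last, mul_one] at this
      have hsum : ∑ i : Fin m, μ' i.castSucc *
          ((if i ∈ J then Fin.snoc (fun j => A i j) (w i)
            else (0 : Fin (n+1) → ℝ)) (Fin.last n))
          = ∑ i, μ i * w i := by
        apply Finset.sum_congr rfl
        intro i _
        by_cases hi : i ∈ J <;> simp [hμ, hi]
      rw [hsum] at this
      have hlast : 0 ≤ μ' (Fin.last m) := hμ'0 _
      linarith [this.symm]
  · obtain ⟨y, h1, h2⟩ := farkas_cone_pi a g hex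
    exfalso
    set xh : Fin n → ℝ := fun j => y j.castSucc with hxh
    set t : ℝ := y (Fin.last n) with ht
    have htle : t ≤ 0 := by
      have := h1 (Fin.last m)
      rw [Fin.sum_univ_castSucc] at this
      simp only [ha, Fin.lastCases_last, Fin.snoc_castSucc, Fin.snoc_last,
        Pi.zero_apply, zero_mul, one_mul] at this
      simpa [ht] using this
    have htlt : t < 0 := by
      have h2' := h2
      rw [Fin.sum_univ_castSucc] at h2'
      simp only [hg, Fin.snoc_castSucc, Fin.snoc_last, Pi.zero_apply, zero_mul] at h2'
      simp only [Finset.sum_const_zero, zero_add] at h2'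
      nlinarith
    have hrow : ∀ i ∈ J, A.mulVec xh i + w i * t ≤ 0 := by
      intro i hi
      have := h1 i.castSucc
      rw [Fin.sum_univ_castSucc] at this
      simp only [ha, Fin.lastCases_castSucc, hi, if_true, Fin.snoc_castSucc,
        Fin.snoc_last] at this
      simpa [Matrix.mulVec, dotProduct, hxh, ht] using this
    apply h
    refine ⟨(-t)⁻¹ • xh, fun i hi => ?_⟩
    have h0 := hrow i hi
    have hmt : 0 < -t := by linarith
    rw [Matrix.mulVec_smul]
    have hle : A.mulVec xh i ≤ w i * (-t) := by linarith
    calc ((-t)⁻¹ • A.mulVec xh) i = (-t)⁻¹ * A.mulVec xh i := rfl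
      _ ≤ (-t)⁻¹ * (w i * (-t)) := mul_le_mul_of_nonneg_left hle (by positivity)
      _ = w i := by
          rw [mul_comm (w i) (-t), ← mul_assoc,
            inv_mul_cancel₀ (by linarith : (-t) ≠ 0), one_mul]



section Plumb

variable {m n : ℕ} (A : Matrix (Fin m) (Fin n) ℝ)

lemma sum_mul_mulVec (ν : Fin m → ℝ) (z : Fin n → ℝ) :
    ∑ i, ν i * A.mulVec z i = ∑ j, (∑ i, ν i * A i j) * z j := by
  calc ∑ i, ν i * A.mulVec z i = ∑ i, ∑ j, ν i * A i j * z j := by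
        apply Finset.sum_congr rfl
        intro i _
        simp [Matrix.mulVec, dotProduct, Finset.mul_sum, mul_assoc]
    _ = ∑ j, ∑ i, ν i * A i j * z j := Finset.sum_comm
    _ = ∑ j, (∑ i, ν i * A i j) * z j := by
        apply Finset.sum_congr rfl
        intro j _
        rw [Finset.sum_mul]

lemma exists_surj_multiplier (b : Fin m → ℝ)
    (hP : ∃ x : Fin n → ℝ, ∀ i, A.mulVec x i ≤ b i) (c : Fin n → ℝ) (d : ℝ)
    (hex : ∃ μ : Fin m → ℝ, (∀ i, 0 ≤ μ i) ∧ (∀ j, ∑ i, μ i * A i j = c j) ∧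
      ∑ i, μ i * b i ≤ d) :
    ∃ μ : Fin m → ℝ, (∀ i, 0 ≤ μ i) ∧ (∀ j, ∑ i, μ i * A i j = c j) ∧
      (∑ i, μ i * b i ≤ d) ∧ ASurj A {i | μ i ≠ 0} := by
  obtain ⟨μ, hμ0, hμA, hμb⟩ := hex
  obtain ⟨k, hk⟩ : ∃ k, (Finset.univ.filter fun i => μ i ≠ 0).card = k := ⟨_, rfl⟩
  induction k using Nat.strong_induction_on generalizing μ with
  | _ k IH =>
  by_cases hsurj : ASurj A {i | μ i ≠ 0}
  · exact ⟨μ, hμ0, hμA, hμb, hsurj⟩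
  rw [ASurj] at hsurj
  push_neg at hsurj
  obtain ⟨w, hw⟩ := hsurj
  obtain ⟨ν, hν0, hνJ, hνA, hνw⟩ := farkas_infeasible A {i | μ i ≠ 0} w (by
    rintro ⟨x, hx⟩
    obtain ⟨i₀, hi₀J, hi₀⟩ := hw x
    exact absurd (hx _ hi₀J) (not_le.mpr hi₀))
  have hνb : 0 ≤ ∑ i, ν i * b i := by
    obtain ⟨z, hz⟩ := hP
    have h1 : ∑ i, ν i * A.mulVec z i = 0 := by
      rw [sum_mul_mulVec]
      simp [hνA]
    have h2 : ∑ i, ν i * A.mulVec z i ≤ ∑ i, ν i * b i :=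
      Finset.sum_le_sum fun i _ => mul_le_mul_of_nonneg_left (hz i) (hν0 i)
    linarith
  have hνne : ∃ i, 0 < ν i := by
    by_contra hcon
    push_neg at hcon
    have : ∀ i, ν i = 0 := fun i => le_antisymm (hcon i) (hν0 i)
    simp [this] at hνw
  obtain ⟨ip, hip⟩ := hνne
  set T : Finset (Fin m) := Finset.univ.filter (fun i => 0 < ν i) with hT
  have hTne : T.Nonempty := ⟨ip, by simp [hT, hip]⟩
  obtain ⟨i0, hi0T, hi0min⟩ := Finset.exists_min_image T (fun i => μ i / ν i) hTne
  have hνi0 : 0 < ν i0 := by simpa [hT] using hi0T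
  set ε : ℝ := μ i0 / ν i0 with hε
  have hε0 : 0 ≤ ε := div_nonneg (hμ0 i0) hνi0.le
  set μ' : Fin m → ℝ := fun i => μ i - ε * ν i with hμ'
  have hμ'0 : ∀ i, 0 ≤ μ' i := by
    intro i
    by_cases hp : 0 < ν i
    · have h1 := hi0min i (by simp [hT, hp])
      have h2 : ε * ν i ≤ μ i := by
        rw [hε]
        calc μ i0 / ν i0 * ν i ≤ μ i / ν i * ν i :=
              mul_le_mul_of_nonneg_right h1 hp.le
          _ = μ i := div_mul_cancel₀ _ hp.ne'
      simp only [hμ', sub_nonneg]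
      exact h2
    · push_neg at hp
      have : ε * ν i ≤ 0 := mul_nonpos_of_nonneg_of_nonpos hε0 hp
      simp only [hμ']
      linarith [hμ0 i]
  have hμ'A : ∀ j, ∑ i, μ' i * A i j = c j := by
    intro j
    simp only [hμ', sub_mul, Finset.sum_sub_distrib, mul_assoc]
    rw [← Finset.mul_sum, hνA j, mul_zero, sub_zero, hμA j]
  have hμ'b : ∑ i, μ' i * b i ≤ d := by
    simp only [hμ', sub_mul, Finset.sum_sub_distrib, mul_assoc]
    rw [← Finset.mul_sum]
    have : 0 ≤ ε * ∑ i, ν i * b i := mul_nonneg hε0 hνb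
    linarith
  have hsub : ∀ i, μ' i ≠ 0 → μ i ≠ 0 := by
    intro i hvi hmi
    have hν0i : ν i = 0 := hνJ i (by simp [hmi])
    exact hvi (by simp [hμ', hν0i, hmi])
  have hμ'i0 : μ' i0 = 0 := by
    simp [hμ', hε, div_mul_cancel₀ _ hνi0.ne']
  have hcard : (Finset.univ.filter fun i => μ' i ≠ 0).card < k := by
    rw [← hk]
    apply Finset.card_lt_card
    constructor
    · intro i hi
      simp only [Finset.mem_filter, Finset.mem_univ, true_and] at hi ⊢
      exact hsub i hi
    · intro hcon
      have hi0 : i0 ∈ Finset.univ.filter fun i => μ i ≠ 0 := by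
        simp only [Finset.mem_filter, Finset.mem_univ, true_and]
        intro h0
        have : ν i0 = 0 := hνJ i0 (by simp [h0])
        exact hνi0.ne' this
      have := hcon hi0
      simp only [Finset.mem_filter, Finset.mem_univ, true_and] at this
      exact this hμ'i0
  exact IH _ hcard μ' hμ'0 hμ'A hμ'b rfl

lemma asurj_empty : ASurj A ∅ := fun w => ⟨0, fun i hi => absurd hi (Set.notMem_empty i)⟩

lemma hjl_bddAbove (L J : Set (Fin m)) (hJ : ASurj A J) :
    BddAbove {t | ∃ y : Fin m → ℝ, (∀ i ∉ L, y i = 0) ∧ ‖y‖ ≤ 1 ∧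
      t = sInf {r | ∃ x : Fin n → ℝ, (∀ i ∈ J, A.mulVec x i ≤ y i) ∧ r = ‖x‖}} := by
  obtain ⟨xb, hxb⟩ := hJ (fun _ => -1)
  refine ⟨‖xb‖, ?_⟩
  rintro t ⟨y, hyL, hy1, rfl⟩
  have hfeas : ∀ i ∈ J, A.mulVec xb i ≤ y i := by
    intro i hi
    have h1 : |y i| ≤ ‖y‖ := by
      have := norm_le_pi_norm y i
      rwa [Real.norm_eq_abs] at this
    have : (-1 : ℝ) ≤ y i := by
      have := abs_le.mp (h1.trans hy1)
      linarith [this.1]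
    exact (hxb i hi).trans this
  exact csInf_le ⟨0, fun r ⟨x, _, hr⟩ => hr ▸ norm_nonneg x⟩ ⟨xb, hfeas, rfl⟩

lemma hjl_nonneg (L J : Set (Fin m)) (hJ : ASurj A J) : 0 ≤ HJL A L J := by
  have h0 : (0 : ℝ) ∈ {t | ∃ y : Fin m → ℝ, (∀ i ∉ L, y i = 0) ∧ ‖y‖ ≤ 1 ∧
      t = sInf {r | ∃ x : Fin n → ℝ, (∀ i ∈ J, A.mulVec x i ≤ y i) ∧ r = ‖x‖}} := by
    refine ⟨0, fun i _ => rfl, by simp, ?_⟩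
    have hmem : (0:ℝ) ∈ {r | ∃ x : Fin n → ℝ,
        (∀ i ∈ J, A.mulVec x i ≤ (0 : Fin m → ℝ) i) ∧ r = ‖x‖} :=
      ⟨0, fun i _ => by simp, by simp⟩
    have h1 : sInf {r | ∃ x : Fin n → ℝ,
        (∀ i ∈ J, A.mulVec x i ≤ (0 : Fin m → ℝ) i) ∧ r = ‖x‖} ≤ 0 :=
      csInf_le ⟨0, fun r ⟨x, _, hr⟩ => hr ▸ norm_nonneg x⟩ hmem
    have h2 : (0:ℝ) ≤ sInf {r | ∃ x : Fin n → ℝ,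
        (∀ i ∈ J, A.mulVec x i ≤ (0 : Fin m → ℝ) i) ∧ r = ‖x‖} :=
      le_csInf ⟨0, hmem⟩ (fun r ⟨x, _, hr⟩ => hr ▸ norm_nonneg x)
    exact (le_antisymm h1 h2).symm
  exact le_csSup (hjl_bddAbove A L J hJ) h0

lemma hoff_bddAbove (L : Set (Fin m)) :
    BddAbove {t | ∃ J : Set (Fin m), ASurj A J ∧ t = HJL A L J} := by
  have : {t | ∃ J : Set (Fin m), ASurj A J ∧ t = HJL A L J}
      = (fun J => HJL A L J) '' {J | ASurj A J} := by
    ext t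
    constructor
    · rintro ⟨J, hJ, rfl⟩; exact ⟨J, hJ, rfl⟩
    · rintro ⟨J, hJ, rfl⟩; exact ⟨J, hJ, rfl⟩
  rw [this]
  exact (Set.toFinite _).image _ |>.bddAbove

lemma hjl_le_hoff (L J : Set (Fin m)) (hJ : ASurj A J) : HJL A L J ≤ HoffAL A L :=
  le_csSup (hoff_bddAbove A L) ⟨J, hJ, rfl⟩

lemma hoff_nonneg (L : Set (Fin m)) : 0 ≤ HoffAL A L :=
  (hjl_nonneg A L ∅ (asurj_empty A)).trans (hjl_le_hoff A L ∅ (asurj_empty A))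

end Plumb




lemma core_bound {m n : ℕ} (A : Matrix (Fin m) (Fin n) ℝ) (L : Set (Fin m)) (b : Fin m → ℝ)
    (hP : {x : Fin n → ℝ | ∀ i, A.mulVec x i ≤ b i}.Nonempty)
    (u : Fin n → ℝ) (v : Fin m → ℝ) (hvL : ∀ i ∉ L, v i = 0)
    (huv : ∀ i, A.mulVec u i ≤ b i + v i) :
    infDist u {x : Fin n → ℝ | ∀ i, A.mulVec x i ≤ b i} ≤ HoffAL A L * ‖v‖ := by
  classical
  set P := {x : Fin n → ℝ | ∀ i, A.mulVec x i ≤ b i} with hPdef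
  have hRHS0 : 0 ≤ HoffAL A L * ‖v‖ := mul_nonneg (hoff_nonneg A L) (norm_nonneg v)
  by_cases hr0' : infDist u P ≤ 0
  · linarith
  push_neg at hr0'
  set r := infDist u P with hrdef
  have hr0 : 0 < r := hr0'
  have hv0 : v ≠ 0 := by
    rintro rfl
    have hu : u ∈ P := fun i => by simpa using huv i
    have : infDist u P ≤ 0 := by
      have h00 := infDist_le_dist_of_mem (x := u) hu
      simpa using h00
    linarith
  have hnv : 0 < ‖v‖ := norm_pos_iff.mpr hv0
  have hconv : Convex ℝ P := by
    have hPi : P = ⋂ i, {x : Fin n → ℝ | A.mulVec x i ≤ b i} := by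
      ext x; simp [hPdef, Set.mem_iInter]
    rw [hPi]
    refine convex_iInter fun i => ?_
    exact convex_halfSpace_le
      ⟨fun x y => by simp [Matrix.mulVec_add], fun t x => by simp [Matrix.mulVec_smul]⟩ _
  have hdisj : Disjoint (ball u r) P := by
    rw [Set.disjoint_left]
    intro x hx hxP
    have h1 : r ≤ dist u x := infDist_le_dist_of_mem hxP
    rw [mem_ball] at hx
    rw [dist_comm] at h1
    linarith
  obtain ⟨f, s, hf1, hf2⟩ :=
    geometric_hahn_banach_open (convex_ball u r) isOpen_ball hconv hdisj
  have hfus : f u < s := hf1 u (mem_ball_self hr0)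
  have hfpos : 0 < s - f u := by linarith
  have hball : ∀ x : Fin n → ℝ, ‖x‖ < r → |f x| < s - f u := by
    intro x hx
    have hmem : ∀ z : Fin n → ℝ, ‖z‖ < r → u + z ∈ ball u r := by
      intro z hz
      rw [mem_ball, dist_eq_norm]
      simpa using hz
    have h1 := hf1 _ (hmem x hx)
    have h2 := hf1 _ (hmem (-x) (by simpa using hx))
    rw [map_add] at h1 h2
    rw [map_neg] at h2
    rw [abs_lt]
    constructor <;> linarith
  have hopn : ‖f‖ ≤ (s - f u) / r := by
    apply ContinuousLinearMap.opNorm_le_bound _ (div_nonneg hfpos.le hr0.le)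
    intro x
    rw [Real.norm_eq_abs]
    by_cases hx0 : x = 0
    · simp [hx0]
    have hnx : 0 < ‖x‖ := norm_pos_iff.mpr hx0
    refine le_of_forall_pos_le_add ?_
    intro δ hδ
    set η := δ * r / (s - f u) with hη
    have hηpos : 0 < η := by positivity
    set z := (r / (‖x‖ + η)) • x with hz
    have hden : 0 < ‖x‖ + η := by linarith
    have hnz : ‖z‖ < r := by
      rw [hz, norm_smul, Real.norm_eq_abs, abs_of_pos (by positivity)]
      rw [div_mul_eq_mul_div, div_lt_iff₀ hden]
      nlinarith
    have hfz := hball z hnz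
    rw [hz, _root_.map_smul, smul_eq_mul, abs_mul,
      abs_of_pos (by positivity : (0:ℝ) < r / (‖x‖ + η))] at hfz
    have hlt : |f x| < (s - f u) * (‖x‖ + η) / r := by
      rw [lt_div_iff₀ hr0]
      calc |f x| * r = r / (‖x‖ + η) * |f x| * (‖x‖ + η) := by
            field_simp
        _ < (s - f u) * (‖x‖ + η) := mul_lt_mul_of_pos_right hfz hden
    have heq : (s - f u) * (‖x‖ + η) / r = (s - f u) / r * ‖x‖ + δ := by
      rw [hη]
      field_simp
    rw [heq] at hlt
    linarith
  have hfN : 0 < ‖f‖ := by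
    obtain ⟨z, hz⟩ := hP
    by_contra hcon
    push_neg at hcon
    have h0 : ‖f‖ = 0 := le_antisymm hcon (norm_nonneg f)
    have hf0 : f = 0 := by rwa [norm_eq_zero] at h0
    have h2 := hf2 z hz
    rw [hf0] at hfus h2
    simp at hfus h2
    linarith
  set N := ‖f‖ with hNdef
  set w : Fin n → ℝ := fun j => f (fun k => if j = k then 1 else 0) with hwdef
  have hfw : ∀ x : Fin n → ℝ, f x = ∑ j, w j * x j := by
    intro x
    have hpi := LinearMap.pi_apply_eq_sum_univ (f : (Fin n → ℝ) →ₗ[ℝ] ℝ) x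
    simp only [ContinuousLinearMap.coe_coe] at hpi
    rw [hpi]
    exact Finset.sum_congr rfl fun j _ => by rw [hwdef]; simp [mul_comm]
  have hsum : ∀ x : Fin n → ℝ, ∑ j, (-w j / N) * x j = -(f x) / N := by
    intro x
    rw [hfw x]
    rw [neg_div, Finset.sum_div, ← Finset.sum_neg_distrib]
    exact Finset.sum_congr rfl fun j _ => by ring
  have hfark := farkas_affine A b hP (fun j => -w j / N) (-s / N) (by
    intro x hx
    have h2 := hf2 x hx
    rw [hsum x]
    rw [div_le_div_iff_of_pos_right hfN]
    linarith)
  obtain ⟨μ, hμ0, hμA, hμb, hsurj⟩ :=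
    exists_surj_multiplier A b hP (fun j => -w j / N) (-s / N) hfark
  set J : Set (Fin m) := {i | μ i ≠ 0} with hJdef
  -- Key 1 : r ≤ ∑ μ (Au - b)
  have e0 : ∀ x : Fin n → ℝ, ∑ i, μ i * A.mulVec x i = -(f x) / N := by
    intro x
    rw [sum_mul_mulVec]
    rw [← hsum x]
    exact Finset.sum_congr rfl fun j _ => by rw [hμA j]
  have hkey1 : r ≤ ∑ i, μ i * (A.mulVec u i - b i) := by
    have e1 : ∑ i, μ i * (A.mulVec u i - b i)
        = ∑ i, μ i * A.mulVec u i - ∑ i, μ i * b i := by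
      rw [← Finset.sum_sub_distrib]
      exact Finset.sum_congr rfl fun i _ => by ring
    rw [e1, e0 u]
    have h3 : N * r ≤ s - f u := by
      have := (le_div_iff₀ hr0).mp hopn
      linarith
    have h4 : -(f u) / N - -s / N = (s - f u) / N := by ring
    have h5 : r ≤ (s - f u) / N := by
      rw [le_div_iff₀ hfN]
      linarith
    linarith [hμb, h4, h5]
  -- the dual vector y
  set y : Fin m → ℝ := -(‖v‖⁻¹ • v) with hydef
  have hyL : ∀ i ∉ L, y i = 0 := fun i hi => by simp [hydef, hvL i hi]
  have hy1 : ‖y‖ ≤ 1 := by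
    rw [hydef, norm_neg, norm_smul, Real.norm_eq_abs, abs_of_pos (inv_pos.mpr hnv),
      inv_mul_cancel₀ hnv.ne']
  have hyv : ∀ i, v i = -(‖v‖ * y i) := by
    intro i
    rw [hydef]
    simp only [Pi.neg_apply, Pi.smul_apply, smul_eq_mul, neg_neg]
    field_simp
  -- the sInf
  set tset : Set ℝ := {r' | ∃ x : Fin n → ℝ, (∀ i ∈ J, A.mulVec x i ≤ y i) ∧ r' = ‖x‖}
    with htset
  have htne : tset.Nonempty := by
    obtain ⟨x₁, hx₁⟩ := hsurj y
    exact ⟨‖x₁‖, x₁, hx₁, rfl⟩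
  have hkey2 : ∀ r' ∈ tset, -∑ i, μ i * y i ≤ r' := by
    rintro r' ⟨x, hx, rfl⟩
    have e1 : ∑ i, μ i * A.mulVec x i ≤ ∑ i, μ i * y i := by
      apply Finset.sum_le_sum
      intro i _
      by_cases hi : μ i = 0
      · simp [hi]
      · exact mul_le_mul_of_nonneg_left (hx i hi) (hμ0 i)
    have e2 := e0 x
    have e3 : |f x| ≤ N * ‖x‖ := by
      have := f.le_opNorm x
      rwa [Real.norm_eq_abs] at this
    have e4 : f x / N ≤ ‖x‖ := by
      rw [div_le_iff₀ hfN]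
      have := (abs_le.mp e3).2
      linarith
    have e5 : -(∑ i, μ i * A.mulVec x i) = f x / N := by
      rw [e2]; ring
    linarith
  have hlb : -∑ i, μ i * y i ≤ sInf tset := le_csInf htne hkey2
  -- Key 3
  have hkey3 : ∑ i, μ i * (A.mulVec u i - b i) ≤ ∑ i, μ i * v i := by
    apply Finset.sum_le_sum
    intro i _
    exact mul_le_mul_of_nonneg_left (by linarith [huv i]) (hμ0 i)
  have hkey4 : ∑ i, μ i * v i = ‖v‖ * -∑ i, μ i * y i := by
    have : ∀ i ∈ Finset.univ, μ i * v i = ‖v‖ * -(μ i * y i) := by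
      intro i _
      rw [hyv i]; ring
    rw [Finset.sum_congr rfl this, ← Finset.mul_sum, ← Finset.sum_neg_distrib]
  -- membership in HJL set
  have hmemHJL : sInf tset ∈ {t | ∃ y' : Fin m → ℝ, (∀ i ∉ L, y' i = 0) ∧ ‖y'‖ ≤ 1 ∧
      t = sInf {r' | ∃ x : Fin n → ℝ, (∀ i ∈ J, A.mulVec x i ≤ y' i) ∧ r' = ‖x‖}} :=
    ⟨y, hyL, hy1, rfl⟩
  have hHJ : sInf tset ≤ HJL A L J := le_csSup (hjl_bddAbove A L J hsurj) hmemHJL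
  have hHoff : HJL A L J ≤ HoffAL A L := hjl_le_hoff A L J hsurj
  -- chain
  have hchain : r ≤ ‖v‖ * HoffAL A L := by
    have c1 : r ≤ ‖v‖ * -∑ i, μ i * y i := by
      rw [← hkey4]
      linarith
    have c2 : ‖v‖ * -∑ i, μ i * y i ≤ ‖v‖ * sInf tset :=
      mul_le_mul_of_nonneg_left hlb hnv.le
    have c3 : ‖v‖ * sInf tset ≤ ‖v‖ * HJL A L J :=
      mul_le_mul_of_nonneg_left hHJ hnv.le
    have c4 : ‖v‖ * HJL A L J ≤ ‖v‖ * HoffAL A L :=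
      mul_le_mul_of_nonneg_left hHoff hnv.le
    linarith
  rw [mul_comm] at hchain
  exact hchain


/-- Proposition 3, bound part: for all `b` with `P_{A,b} ≠ ∅` and
all `u` with `A_{L^c} u ≤ b_{L^c}`,
`dist(u,P_{A,b}) ≤ H(A|L)·dist_L(b, Au + ℝ^m_+) ≤ H(A|L)·‖(A_L u − b_L)_+‖`. -/
theorem hoffman_ineq_bound_rest {m n : ℕ} (A : Matrix (Fin m) (Fin n) ℝ)
    (L : Set (Fin m)) (b : Fin m → ℝ)
    (hP : {x : Fin n → ℝ | ∀ i, A.mulVec x i ≤ b i}.Nonempty)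
    (u : Fin n → ℝ) (hu : ∀ i ∉ L, A.mulVec u i ≤ b i) :
    infDist u {x : Fin n → ℝ | ∀ i, A.mulVec x i ≤ b i} ≤
      HoffAL A L * distL L b
        {y : Fin m → ℝ | ∃ s : Fin m → ℝ, (∀ i, 0 ≤ s i) ∧ y = A.mulVec u + s} ∧
    HoffAL A L * distL L b
        {y : Fin m → ℝ | ∃ s : Fin m → ℝ, (∀ i, 0 ≤ s i) ∧ y = A.mulVec u + s} ≤
      HoffAL A L *
        ‖(fun i => if i ∈ L then max (A.mulVec u i - b i) 0 else 0 : Fin m → ℝ)‖ := by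
  classical
  set T : Fin m → ℝ :=
    (fun i => if i ∈ L then max (A.mulVec u i - b i) 0 else 0 : Fin m → ℝ) with hT
  set s₀ : Fin m → ℝ := fun i => max (b i - A.mulVec u i) 0 with hs₀
  set y₀ : Fin m → ℝ := A.mulVec u + s₀ with hy₀
  have hby₀ : b - y₀ = -T := by
    funext i
    simp only [Pi.sub_apply, Pi.neg_apply, hy₀, hs₀, hT, Pi.add_apply]
    by_cases hi : i ∈ L
    · simp only [hi, if_true]
      rcases le_total (A.mulVec u i) (b i) with h | h
      · rw [max_eq_left (by linarith), max_eq_right (by linarith)]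
        ring
      · rw [max_eq_right (by linarith), max_eq_left (by linarith)]
        ring
    · have h := hu i hi
      simp only [hi, if_false]
      rw [max_eq_left (by linarith)]
      ring
  have hy₀S : y₀ ∈ {y : Fin m → ℝ | ∃ s : Fin m → ℝ, (∀ i, 0 ≤ s i) ∧
      y = A.mulVec u + s} := ⟨s₀, fun i => le_max_right _ _, rfl⟩
  have hy₀L : ∀ i ∉ L, b i - y₀ i = 0 := by
    intro i hi
    have := congrFun hby₀ i
    simp only [Pi.sub_apply, Pi.neg_apply] at this
    rw [this, hT]
    simp [hi]
  have hmem : ‖b - y₀‖ ∈ {r | ∃ y ∈ {y : Fin m → ℝ | ∃ s : Fin m → ℝ,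
      (∀ i, 0 ≤ s i) ∧ y = A.mulVec u + s}, (∀ i ∉ L, b i - y i = 0) ∧ r = ‖b - y‖} :=
    ⟨y₀, hy₀S, hy₀L, rfl⟩
  have hbdd : BddBelow {r | ∃ y ∈ {y : Fin m → ℝ | ∃ s : Fin m → ℝ,
      (∀ i, 0 ≤ s i) ∧ y = A.mulVec u + s}, (∀ i ∉ L, b i - y i = 0) ∧ r = ‖b - y‖} :=
    ⟨0, fun r ⟨y, _, _, hr⟩ => hr ▸ norm_nonneg _⟩
  have hne : {r | ∃ y ∈ {y : Fin m → ℝ | ∃ s : Fin m → ℝ,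
      (∀ i, 0 ≤ s i) ∧ y = A.mulVec u + s}, (∀ i ∉ L, b i - y i = 0) ∧
      r = ‖b - y‖}.Nonempty := ⟨_, hmem⟩
  have hH0 : 0 ≤ HoffAL A L := hoff_nonneg A L
  have hpart2 : distL L b {y : Fin m → ℝ | ∃ s : Fin m → ℝ, (∀ i, 0 ≤ s i) ∧
      y = A.mulVec u + s} ≤ ‖T‖ := by
    have h1 : ‖b - y₀‖ = ‖T‖ := by rw [hby₀, norm_neg]
    rw [← h1]
    exact csInf_le hbdd hmem
  constructor
  · -- first inequality
    refine le_of_forall_pos_le_add ?_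
    intro ε hε
    set H := HoffAL A L with hH
    obtain ⟨r', hr'mem, hr'lt⟩ :=
      Real.lt_sInf_add_pos hne (by positivity : 0 < ε / (H + 1))
    obtain ⟨y, hyS, hyL, hr'⟩ := hr'mem
    obtain ⟨sv, hsv0, hyeq⟩ := hyS
    have hcore := core_bound A L b hP u (y - b)
      (fun i hi => by
        have := hyL i hi
        simp only [Pi.sub_apply]
        linarith)
      (fun i => by
        have h1 : y i = A.mulVec u i + sv i := congrFun hyeq i
        have := hsv0 i
        simp only [Pi.sub_apply]
        linarith)
    have hnorm : ‖y - b‖ = r' := by rw [hr', norm_sub_rev]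
    rw [hnorm] at hcore
    have hdL : distL L b {y : Fin m → ℝ | ∃ s : Fin m → ℝ, (∀ i, 0 ≤ s i) ∧
        y = A.mulVec u + s} = sInf {r | ∃ y ∈ {y : Fin m → ℝ | ∃ s : Fin m → ℝ,
        (∀ i, 0 ≤ s i) ∧ y = A.mulVec u + s}, (∀ i ∉ L, b i - y i = 0) ∧
        r = ‖b - y‖} := rfl
    have h2 : H * r' ≤ H * sInf {r | ∃ y ∈ {y : Fin m → ℝ | ∃ s : Fin m → ℝ,
        (∀ i, 0 ≤ s i) ∧ y = A.mulVec u + s}, (∀ i ∉ L, b i - y i = 0) ∧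
        r = ‖b - y‖} + H * (ε / (H + 1)) := by
      have h2' := mul_le_mul_of_nonneg_left hr'lt.le hH0
      rw [mul_add] at h2'
      exact h2'
    have h3 : H * (ε / (H + 1)) ≤ ε := by
      have hpos : (0:ℝ) < H + 1 := by linarith
      rw [mul_div_assoc', div_le_iff₀ hpos]
      nlinarith
    rw [hdL]
    linarith [hcore, h2, h3]
  · exact mul_le_mul_of_nonneg_left hpart2 hH0
end

section
/- Let A ∈ ℝ^{m×n} and L ⊆ {1,…,m}. If H(A|L) > 0, then there exist b ∈ ℝ^m with P_{A,b} := {x : Ax ≤ b} nonempty and u satisfying A_{L^c} u ≤ b_{L^c} but u ∉ P_{A,b}, such that dist(u, P_{A,b}) = H(A|L) · dist_L(b, Au + ℝ^m_+). -/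
open Matrix Metric

/-- The feasible-norm set for `A_J x ≤ y_J`. -/
def fSet {m n : ℕ} (A : Matrix (Fin m) (Fin n) ℝ) (J : Set (Fin m)) (y : Fin m → ℝ) : Set ℝ :=
  {r | ∃ x : Fin n → ℝ, (∀ i ∈ J, A.mulVec x i ≤ y i) ∧ r = ‖x‖}

lemma fSet_bddBelow {m n : ℕ} (A : Matrix (Fin m) (Fin n) ℝ) (J : Set (Fin m)) (y : Fin m → ℝ) :
    BddBelow (fSet A J y) := by
  refine ⟨0, ?_⟩
  rintro r ⟨x, -, rfl⟩
  positivity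

lemma fSet_nonempty {m n : ℕ} {A : Matrix (Fin m) (Fin n) ℝ} {J : Set (Fin m)}
    (hJ : ASurj A J) (y : Fin m → ℝ) : (fSet A J y).Nonempty := by
  obtain ⟨x, hx⟩ := hJ y
  exact ⟨‖x‖, x, hx, rfl⟩

/-- The min-norm-solution value. -/
noncomputable def fmin {m n : ℕ} (A : Matrix (Fin m) (Fin n) ℝ) (J : Set (Fin m))
    (y : Fin m → ℝ) : ℝ := sInf (fSet A J y)

lemma fmin_le {m n : ℕ} {A : Matrix (Fin m) (Fin n) ℝ} {J : Set (Fin m)} {y : Fin m → ℝ}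
    {x : Fin n → ℝ} (hx : ∀ i ∈ J, A.mulVec x i ≤ y i) : fmin A J y ≤ ‖x‖ :=
  csInf_le (fSet_bddBelow A J y) ⟨x, hx, rfl⟩

lemma le_fmin {m n : ℕ} {A : Matrix (Fin m) (Fin n) ℝ} {J : Set (Fin m)} {y : Fin m → ℝ}
    (hJ : ASurj A J) {c : ℝ} (hc : ∀ x : Fin n → ℝ, (∀ i ∈ J, A.mulVec x i ≤ y i) → c ≤ ‖x‖) :
    c ≤ fmin A J y := by
  refine le_csInf (fSet_nonempty hJ y) ?_
  rintro r ⟨x, hx, rfl⟩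
  exact hc x hx

lemma fmin_nonneg {m n : ℕ} {A : Matrix (Fin m) (Fin n) ℝ} {J : Set (Fin m)}
    (hJ : ASurj A J) (y : Fin m → ℝ) : 0 ≤ fmin A J y :=
  le_fmin hJ fun x _ => norm_nonneg x

lemma mulVec_continuous' {m n : ℕ} (A : Matrix (Fin m) (Fin n) ℝ) (i : Fin m) :
    Continuous fun x : Fin n → ℝ => A.mulVec x i := by
  simp only [Matrix.mulVec, dotProduct]
  exact continuous_finset_sum _ fun j _ => continuous_const.mul (continuous_apply j)

/-- The min-norm solution is attained. -/
lemma exists_fmin {m n : ℕ} {A : Matrix (Fin m) (Fin n) ℝ} {J : Set (Fin m)}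
    (hJ : ASurj A J) (y : Fin m → ℝ) :
    ∃ x : Fin n → ℝ, (∀ i ∈ J, A.mulVec x i ≤ y i) ∧ ‖x‖ = fmin A J y := by
  obtain ⟨x0, hx0⟩ := hJ y
  set F : Set (Fin n → ℝ) := {x | ∀ i ∈ J, A.mulVec x i ≤ y i} with hF
  have hFc : IsClosed F := by
    have : F = ⋂ i ∈ J, {x : Fin n → ℝ | A.mulVec x i ≤ y i} := by
      ext x; simp [hF, Set.mem_iInter]
    rw [this]
    exact isClosed_biInter fun i _ => isClosed_le (mulVec_continuous' A i) continuous_const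
  set K : Set (Fin n → ℝ) := F ∩ closedBall 0 ‖x0‖ with hK
  have hKc : IsCompact K :=
    (isCompact_closedBall (0 : Fin n → ℝ) ‖x0‖).of_isClosed_subset
      (hFc.inter isClosed_closedBall) Set.inter_subset_right
  have hKne : K.Nonempty := ⟨x0, hx0, by simp [mem_closedBall, dist_eq_norm]⟩
  obtain ⟨xh, hxhK, hxhmin⟩ := hKc.exists_isMinOn hKne continuous_norm.continuousOn
  refine ⟨xh, hxhK.1, le_antisymm ?_ (fmin_le hxhK.1)⟩
  refine le_fmin hJ fun x hx => ?_
  by_cases hxb : ‖x‖ ≤ ‖x0‖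
  · exact hxhmin (show x ∈ K from ⟨hx, by simpa [mem_closedBall, dist_eq_norm] using hxb⟩)
  · push_neg at hxb
    have h1 : ‖xh‖ ≤ ‖x0‖ :=
      hxhmin (show x0 ∈ K from ⟨hx0, by simp [mem_closedBall, dist_eq_norm]⟩)
    linarith

lemma fmin_antitone {m n : ℕ} {A : Matrix (Fin m) (Fin n) ℝ} {J : Set (Fin m)}
    (hJ : ASurj A J) {y z : Fin m → ℝ} (h : ∀ i ∈ J, z i ≤ y i) : fmin A J y ≤ fmin A J z := by
  refine le_fmin hJ fun x hx => fmin_le fun i hi => le_trans (hx i hi) (h i hi)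

lemma fmin_smul {m n : ℕ} {A : Matrix (Fin m) (Fin n) ℝ} {J : Set (Fin m)}
    (hJ : ASurj A J) (y : Fin m → ℝ) {c : ℝ} (hc : 0 < c) :
    fmin A J (c • y) = c * fmin A J y := by
  have h1 : fmin A J (c • y) ≤ c * fmin A J y := by
    obtain ⟨x, hx, hxe⟩ := exists_fmin hJ y
    have : ∀ i ∈ J, A.mulVec (c • x) i ≤ (c • y) i := by
      intro i hi
      rw [A.mulVec_smul]
      exact mul_le_mul_of_nonneg_left (hx i hi) hc.le
    calc fmin A J (c • y) ≤ ‖c • x‖ := fmin_le this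
    _ = c * ‖x‖ := by rw [norm_smul, Real.norm_eq_abs, abs_of_pos hc]
    _ = c * fmin A J y := by rw [hxe]
  have h2 : c * fmin A J y ≤ fmin A J (c • y) := by
    obtain ⟨x, hx, hxe⟩ := exists_fmin hJ (c • y)
    have : ∀ i ∈ J, A.mulVec (c⁻¹ • x) i ≤ y i := by
      intro i hi
      rw [A.mulVec_smul]
      have := mul_le_mul_of_nonneg_left (hx i hi) (inv_pos.2 hc).le
      simpa [Pi.smul_apply, smul_eq_mul, ← mul_assoc, inv_mul_cancel₀ hc.ne'] using this
    have hle : fmin A J y ≤ ‖c⁻¹ • x‖ := fmin_le this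
    rw [norm_smul, Real.norm_eq_abs, abs_of_pos (inv_pos.2 hc)] at hle
    have := mul_le_mul_of_nonneg_left hle hc.le
    rw [← mul_assoc, mul_inv_cancel₀ hc.ne', one_mul] at this
    linarith [hxe ▸ this]
  linarith

lemma fmin_add_le {m n : ℕ} {A : Matrix (Fin m) (Fin n) ℝ} {J : Set (Fin m)}
    (hJ : ASurj A J) (y z : Fin m → ℝ) :
    fmin A J (y + z) ≤ fmin A J y + fmin A J z := by
  obtain ⟨xy, hxy, hxye⟩ := exists_fmin hJ y
  obtain ⟨xz, hxz, hxze⟩ := exists_fmin hJ z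
  have : ∀ i ∈ J, A.mulVec (xy + xz) i ≤ (y + z) i := by
    intro i hi
    rw [A.mulVec_add]
    exact add_le_add (hxy i hi) (hxz i hi)
  calc fmin A J (y + z) ≤ ‖xy + xz‖ := fmin_le this
  _ ≤ ‖xy‖ + ‖xz‖ := norm_add_le _ _
  _ = _ := by rw [hxye, hxze]

/-- Proposition 3, tightness: if `H(A|L) > 0` then there exist
`b` with `P_{A,b} ≠ ∅` and `u` with `A_{L^c} u ≤ b_{L^c}` but `u ∉ P_{A,b}`
such that `dist(u, P_{A,b}) = H(A|L)·dist_L(b, Au + ℝ^m_+)`. -/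
theorem hoffman_ineq_tight_rest {m n : ℕ} (A : Matrix (Fin m) (Fin n) ℝ)
    (L : Set (Fin m)) (hH : 0 < HoffAL A L) :
    ∃ b : Fin m → ℝ, {x : Fin n → ℝ | ∀ i, A.mulVec x i ≤ b i}.Nonempty ∧
      ∃ u : Fin n → ℝ, (∀ i ∉ L, A.mulVec u i ≤ b i) ∧
        u ∉ {x : Fin n → ℝ | ∀ i, A.mulVec x i ≤ b i} ∧
        infDist u {x : Fin n → ℝ | ∀ i, A.mulVec x i ≤ b i} =
          HoffAL A L * distL L b
            {y : Fin m → ℝ | ∃ s : Fin m → ℝ, (∀ i, 0 ≤ s i) ∧ y = A.mulVec u + s} := by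
  classical
  -- Step 1: the outer sup is attained at some surjective Js
  set U : Set ℝ := {t | ∃ J : Set (Fin m), ASurj A J ∧ t = HJL A L J} with hU
  have hUne : U.Nonempty :=
    ⟨HJL A L ∅, ∅, fun w => ⟨0, fun i hi => absurd hi (Set.notMem_empty i)⟩, rfl⟩
  have hUfin : U.Finite := by
    have : U = (fun J => HJL A L J) '' {J | ASurj A J} := by
      ext t
      constructor
      · rintro ⟨J, hJ, rfl⟩; exact ⟨J, hJ, rfl⟩
      · rintro ⟨J, hJ, rfl⟩; exact ⟨J, hJ, rfl⟩
    rw [this]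
    exact Set.Finite.image _ (Set.toFinite _)
  have hmem : HoffAL A L ∈ U := by
    rw [show HoffAL A L = sSup U from rfl]
    exact hUne.csSup_mem hUfin
  obtain ⟨Js, hJs, hHval⟩ := hmem
  -- Step 2: properties of the inner sup set T
  set T : Set ℝ := {t | ∃ y : Fin m → ℝ, (∀ i ∉ L, y i = 0) ∧ ‖y‖ ≤ 1 ∧ t = fmin A Js y}
    with hT
  have hTsup : sSup T = HoffAL A L := by rw [hHval]; rfl
  have hTne : T.Nonempty := ⟨fmin A Js 0, 0, fun i _ => rfl, by simp, rfl⟩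
  have hTbdd : BddAbove T := by
    by_contra hb
    rw [Real.sSup_of_not_bddAbove hb] at hTsup
    exact absurd hTsup.symm (ne_of_gt hH)
  have hfle : ∀ y : Fin m → ℝ, (∀ i ∉ L, y i = 0) → ‖y‖ ≤ 1 → fmin A Js y ≤ HoffAL A L :=
    fun y h1 h2 => hTsup ▸ le_csSup hTbdd ⟨y, h1, h2, rfl⟩
  have hf0 : fmin A Js 0 ≤ 0 := by
    have := fmin_le (A := A) (J := Js) (y := 0) (x := 0)
      (fun i _ => by simp [Matrix.mulVec_zero])
    simpa using this
  -- scaling bound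
  have hfbound : ∀ y : Fin m → ℝ, (∀ i ∉ L, y i = 0) →
      fmin A Js y ≤ HoffAL A L * ‖y‖ := by
    intro y h1
    rcases eq_or_ne y 0 with rfl | hy0
    · simpa using hf0
    · have hn : 0 < ‖y‖ := norm_pos_iff.2 hy0
      have hmem1 : fmin A Js (‖y‖⁻¹ • y) ≤ HoffAL A L := by
        refine hfle _ (fun i hi => by simp [h1 i hi]) ?_
        rw [norm_smul, Real.norm_eq_abs, abs_of_pos (inv_pos.2 hn), inv_mul_cancel₀ hn.ne']
      have hs : fmin A Js (‖y‖ • (‖y‖⁻¹ • y)) = ‖y‖ * fmin A Js (‖y‖⁻¹ • y) :=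
        fmin_smul hJs _ hn
      rw [smul_smul, mul_inv_cancel₀ hn.ne', one_smul] at hs
      rw [hs, mul_comm]
      exact mul_le_mul_of_nonneg_right hmem1 hn.le
  -- Step 3: max over the compact set K is attained
  set V : Set (Fin m → ℝ) := {y | ∀ i ∉ L, y i = 0} with hV
  set K : Set (Fin m → ℝ) := V ∩ closedBall 0 1 with hK
  have hVclosed : IsClosed V := by
    have : V = ⋂ (i : Fin m) (_ : i ∉ L), {y : Fin m → ℝ | y i = 0} := by
      ext y; simp [hV, Set.mem_iInter]
    rw [this]
    exact isClosed_iInter fun i => isClosed_iInter fun _ =>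
      isClosed_eq (continuous_apply i) continuous_const
  have hKcomp : IsCompact K :=
    (isCompact_closedBall (0 : Fin m → ℝ) 1).of_isClosed_subset
      (hVclosed.inter isClosed_closedBall) Set.inter_subset_right
  have hKne : K.Nonempty := ⟨0, fun i _ => rfl, by simp⟩
  have hlip : ∀ a ∈ V, ∀ c ∈ V, fmin A Js a ≤ fmin A Js c + HoffAL A L * ‖a - c‖ := by
    intro a ha c hc
    have hsub : fmin A Js (c + (a - c)) ≤ fmin A Js c + fmin A Js (a - c) :=
      fmin_add_le hJs c (a - c)
    have heq : c + (a - c) = a := by abel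
    rw [heq] at hsub
    have : fmin A Js (a - c) ≤ HoffAL A L * ‖a - c‖ :=
      hfbound _ (fun i hi => by simp [ha i hi, hc i hi])
    linarith
  have hcont : ContinuousOn (fmin A Js) K := by
    have : ContinuousOn (fmin A Js) V := by
      refine (LipschitzOnWith.of_dist_le_mul (K := (HoffAL A L).toNNReal) ?_).continuousOn
      intro a ha c hc
      rw [Real.dist_eq, Real.coe_toNNReal _ hH.le, dist_eq_norm, abs_sub_le_iff]
      constructor
      · linarith [hlip a ha c hc]
      · have := hlip c hc a ha
        rw [norm_sub_rev] at this
        linarith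
    exact this.mono Set.inter_subset_left
  obtain ⟨ys, hysK, hysmax⟩ := hKcomp.exists_isMaxOn hKne hcont
  have hysV : ∀ i ∉ L, ys i = 0 := hysK.1
  have hysball : ‖ys‖ ≤ 1 := by simpa [mem_closedBall, dist_eq_norm] using hysK.2
  have hyseq : fmin A Js ys = HoffAL A L := by
    refine le_antisymm (hfle ys hysV hysball) ?_
    rw [← hTsup]
    refine csSup_le hTne ?_
    rintro t ⟨y, h1, h2, rfl⟩
    exact hysmax (show y ∈ K from ⟨h1, by simpa [mem_closedBall, dist_eq_norm] using h2⟩)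
  -- ‖ys‖ = 1
  have hysne : ys ≠ 0 := by
    intro h
    rw [h] at hyseq
    linarith [hf0, hyseq]
  have hysnorm : ‖ys‖ = 1 := by
    refine le_antisymm hysball ?_
    by_contra hlt
    push_neg at hlt
    have hn : 0 < ‖ys‖ := norm_pos_iff.2 hysne
    have hc1 : 1 < ‖ys‖⁻¹ := (one_lt_inv₀ hn).2 hlt
    have hmem1 : fmin A Js (‖ys‖⁻¹ • ys) ≤ HoffAL A L := by
      refine hfle _ (fun i hi => by simp [hysV i hi]) ?_
      rw [norm_smul, Real.norm_eq_abs, abs_of_pos (inv_pos.2 hn), inv_mul_cancel₀ hn.ne']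
    have hs : fmin A Js (‖ys‖⁻¹ • ys) = ‖ys‖⁻¹ * fmin A Js ys :=
      fmin_smul hJs ys (inv_pos.2 hn)
    rw [hs, hyseq] at hmem1
    nlinarith
  -- minimizer for ys
  obtain ⟨xh, hxh, hxhe⟩ := exists_fmin hJs ys
  rw [hyseq] at hxhe
  -- the data
  set C : ℝ := max ‖A.mulVec xh‖ 1 with hC
  have hC0 : (0 : ℝ) ≤ C := le_trans zero_le_one (le_max_right _ _)
  have hCA : ∀ i, A.mulVec xh i ≤ C := by
    intro i
    have h1 : A.mulVec xh i ≤ ‖A.mulVec xh‖ := by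
      have := norm_le_pi_norm (A.mulVec xh) i
      rw [Real.norm_eq_abs] at this
      exact le_trans (le_abs_self _) this
    exact le_trans h1 (le_max_left _ _)
  have hCy : ∀ i, ys i ≤ C := by
    intro i
    have h1 : ys i ≤ ‖ys‖ := by
      have := norm_le_pi_norm ys i
      rw [Real.norm_eq_abs] at this
      exact le_trans (le_abs_self _) this
    rw [hysnorm] at h1
    exact le_trans h1 (le_max_right _ _)
  set b : Fin m → ℝ := fun i => if i ∈ Js then ys i else C with hb
  have hxhP : ∀ i, A.mulVec xh i ≤ b i := by
    intro i
    by_cases hi : i ∈ Js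
    · simpa [hb, hi] using hxh i hi
    · simpa [hb, hi] using hCA i
  refine ⟨b, ⟨xh, hxhP⟩, 0, ?_, ?_, ?_⟩
  · -- A_{L^c} 0 ≤ b_{L^c}
    intro i hi
    rw [Matrix.mulVec_zero]
    by_cases hiJ : i ∈ Js
    · simp [hb, hiJ, hysV i hi]
    · simp only [hb, if_neg hiJ, Pi.zero_apply]
      exact hC0
  · -- 0 ∉ P
    intro h0
    simp only [Set.mem_setOf_eq, Matrix.mulVec_zero, Pi.zero_apply] at h0
    have : fmin A Js ys ≤ ‖(0 : Fin n → ℝ)‖ := by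
      refine fmin_le fun i hi => ?_
      rw [Matrix.mulVec_zero]
      simpa [hb, hi] using h0 i
    rw [hyseq] at this
    simp at this
    linarith
  · -- the equality
    have hPne : {x : Fin n → ℝ | ∀ i, A.mulVec x i ≤ b i}.Nonempty := ⟨xh, hxhP⟩
    have hdistP : infDist (0 : Fin n → ℝ) {x : Fin n → ℝ | ∀ i, A.mulVec x i ≤ b i}
        = HoffAL A L := by
      refine le_antisymm ?_ ?_
      · have := infDist_le_dist_of_mem (x := (0 : Fin n → ℝ))
          (show xh ∈ {x : Fin n → ℝ | ∀ i, A.mulVec x i ≤ b i} from hxhP)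
        rw [dist_eq_norm, zero_sub, norm_neg, hxhe] at this
        exact this
      · by_contra hlt
        push_neg at hlt
        obtain ⟨x, hx, hd⟩ := (infDist_lt_iff hPne).1 hlt
        rw [dist_eq_norm, zero_sub, norm_neg] at hd
        have hfeas : ∀ i ∈ Js, A.mulVec x i ≤ ys i := by
          intro i hi
          simpa [hb, hi] using hx i
        have := fmin_le hfeas
        rw [hyseq] at this
        linarith
    have hdistL : distL L b
        {y : Fin m → ℝ | ∃ s : Fin m → ℝ, (∀ i, 0 ≤ s i) ∧ y = A.mulVec 0 + s} = 1 := by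
      rw [distL]
      refine le_antisymm ?_ ?_
      · refine csInf_le ⟨0, ?_⟩ ?_
        · rintro r ⟨y, hy, hsupp, rfl⟩
          positivity
        · refine ⟨b - ys, ⟨b - ys, ?_, by rw [Matrix.mulVec_zero, zero_add]⟩, ?_, ?_⟩
          · intro i
            by_cases hi : i ∈ Js
            · simp [hb, hi]
            · simp only [Pi.sub_apply, hb, if_neg hi, sub_nonneg]
              exact hCy i
          · intro i hi
            simp [hysV i hi]
          · simp [hysnorm]
      · refine le_csInf ⟨1, b - ys, ⟨b - ys, ?_, by rw [Matrix.mulVec_zero, zero_add]⟩, ?_, ?_⟩ ?_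
        · intro i
          by_cases hi : i ∈ Js
          · simp [hb, hi]
          · simp only [Pi.sub_apply, hb, if_neg hi, sub_nonneg]
            exact hCy i
        · intro i hi
          simp [hysV i hi]
        · simp [hysnorm]
        · rintro r ⟨y, ⟨s, hs, rfl⟩, hsupp, rfl⟩
          rw [Matrix.mulVec_zero, zero_add] at *
          set z : Fin m → ℝ := b - s with hz
          have hzV : ∀ i ∉ L, z i = 0 := fun i hi => by simpa [hz] using hsupp i hi
          have hzle : ∀ i ∈ Js, z i ≤ ys i := by
            intro i hi
            have : z i ≤ b i := by simp [hz, hs i]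
            simpa [hb, hi] using this
          have h1 : HoffAL A L ≤ fmin A Js z := by
            rw [← hyseq]
            exact fmin_antitone hJs hzle
          have h2 : fmin A Js z ≤ HoffAL A L * ‖z‖ := hfbound z hzV
          nlinarith
    rw [hdistL, hdistP, mul_one]
end

section
/- Let A ∈ ℝ^{m×n} with A ≠ 0 and L ⊆ {1,…,m}. Then for all J ∈ S(A), H_J(A|L) = max{ ‖v_{J∩L}‖* : v ∈ ℝ^J_+, ‖A_Jᵀ v‖* ≤ 1 } = 1 / min{ ‖A_Jᵀ v‖* : v ∈ ℝ^J_+, ‖v_{J∩L}‖* = 1 }, with the convention that the last denominator is +∞ (so the value is 0) when J ∩ L = ∅. -/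
open Matrix Metric
open scoped Classical

open scoped Pointwise

lemma pos_ker {m n : ℕ} (A : Matrix (Fin m) (Fin n) ℝ) (J : Set (Fin m)) (hJ : ASurj A J)
    (w : Fin m → ℝ) (h0 : ∀ i, 0 ≤ w i) (hs : ∀ i ∉ J, w i = 0)
    (hker : A.transpose.mulVec w = 0) : w = 0 := by
  obtain ⟨x₀, hx₀⟩ := hJ (fun _ => -1)
  have hvm : A.vecMul w = 0 := by rw [← Matrix.mulVec_transpose]; exact hker
  have hdot : w ⬝ᵥ A.mulVec x₀ = 0 := by
    rw [Matrix.dotProduct_mulVec, hvm, zero_dotProduct]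
  have hle : w ⬝ᵥ A.mulVec x₀ ≤ ∑ i, -(w i) := by
    unfold dotProduct
    apply Finset.sum_le_sum
    intro i _
    by_cases hi : i ∈ J
    · have := hx₀ i hi
      calc w i * A.mulVec x₀ i ≤ w i * (-1) := mul_le_mul_of_nonneg_left this (h0 i)
        _ = -(w i) := by ring
    · simp [hs i hi]
  rw [hdot] at hle
  have hsum : ∑ i, w i ≤ 0 := by
    have h' : (0:ℝ) ≤ -∑ i, w i := by simpa [Finset.sum_neg_distrib] using hle
    linarith
  have : ∀ i ∈ Finset.univ, w i = 0 :=
    (Finset.sum_eq_zero_iff_of_nonneg (fun i _ => h0 i)).1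
      (le_antisymm hsum (Finset.sum_nonneg fun i _ => h0 i))
  funext i; exact this i (Finset.mem_univ i)

lemma dualNorm_eq_sum_abs {d : ℕ} (v : Fin d → ℝ) : dualNorm v = ∑ i, |v i| := by
  unfold dualNorm
  have hub : ∀ t ∈ {t | ∃ x : Fin d → ℝ, ‖x‖ ≤ 1 ∧ t = ∑ i, v i * x i}, t ≤ ∑ i, |v i| := by
    rintro t ⟨x, hx, rfl⟩
    calc ∑ i, v i * x i ≤ ∑ i, |v i * x i| := Finset.sum_le_sum fun i _ => le_abs_self _
      _ = ∑ i, |v i| * |x i| := by simp [abs_mul]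
      _ ≤ ∑ i, |v i| * 1 := by
          apply Finset.sum_le_sum
          intro i _
          exact mul_le_mul_of_nonneg_left ((norm_le_pi_norm x i).trans hx) (abs_nonneg _)
      _ = ∑ i, |v i| := by simp
  have hmem : (∑ i, |v i|) ∈ {t | ∃ x : Fin d → ℝ, ‖x‖ ≤ 1 ∧ t = ∑ i, v i * x i} := by
    refine ⟨fun i => if 0 ≤ v i then 1 else -1, ?_, ?_⟩
    · refine (pi_norm_le_iff_of_nonneg zero_le_one).2 fun i => ?_
      by_cases h : 0 ≤ v i <;> simp [h]
    · refine Finset.sum_congr rfl fun i _ => ?_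
      by_cases h : 0 ≤ v i
      · simp [h, abs_of_nonneg h]
      · simp [h, abs_of_neg (lt_of_not_ge h)]
  exact le_antisymm (csSup_le ⟨_, hmem⟩ hub) (le_csSup ⟨_, hub⟩ hmem)

lemma dot_trans {m n : ℕ} (A : Matrix (Fin m) (Fin n) ℝ) (v : Fin m → ℝ) (x : Fin n → ℝ) :
    ∑ i, v i * A.mulVec x i = ∑ j, A.transpose.mulVec v j * x j := by
  have : v ⬝ᵥ A.mulVec x = A.vecMul v ⬝ᵥ x := Matrix.dotProduct_mulVec v A x
  rw [← Matrix.mulVec_transpose] at this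
  simpa [dotProduct] using this

lemma abs_dot_le {d : ℕ} (a x : Fin d → ℝ) : |∑ j, a j * x j| ≤ (∑ j, |a j|) * ‖x‖ := by
  calc |∑ j, a j * x j| ≤ ∑ j, |a j * x j| := Finset.abs_sum_le_sum_abs _ _
    _ ≤ ∑ j, |a j| * ‖x‖ := by
        apply Finset.sum_le_sum
        intro j _
        rw [abs_mul]
        refine mul_le_mul_of_nonneg_left ?_ (abs_nonneg _)
        rw [← Real.norm_eq_abs]
        exact norm_le_pi_norm x j
    _ = (∑ j, |a j|) * ‖x‖ := (Finset.sum_mul _ _ _).symm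


lemma key_sep {m n : ℕ} (A : Matrix (Fin m) (Fin n) ℝ) (L J : Set (Fin m)) (hJ : ASurj A J)
    (y : Fin m → ℝ) (hyL : ∀ i ∉ L, y i = 0) (hy : ‖y‖ ≤ 1)
    (r : ℝ) (hr : 0 ≤ r)
    (hinf : ¬ ∃ x : Fin n → ℝ, ‖x‖ ≤ r ∧ ∀ i ∈ J, A.mulVec x i ≤ y i) :
    ∃ v : Fin m → ℝ, (∀ i, 0 ≤ v i) ∧ (∀ i ∉ J, v i = 0) ∧
      (∑ j, |A.transpose.mulVec v j|) ≤ 1 ∧ r < ∑ i, (if i ∈ J ∩ L then v i else 0) := by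
  classical
  set C : Set (Fin m → ℝ) := {s | ∀ i ∈ J, 0 ≤ s i} with hC
  set K : Set (Fin m → ℝ) := (A.mulVec '' closedBall 0 r) + C with hK
  have hCclosed : IsClosed C := by
    have : C = ⋂ i ∈ J, {s : Fin m → ℝ | 0 ≤ s i} := by ext s; simp [hC]
    rw [this]
    exact isClosed_biInter fun i _ => isClosed_le continuous_const (continuous_apply i)
  have hCconv : Convex ℝ C := by
    intro s₁ h₁ s₂ h₂ a b ha hb _
    intro i hi
    have := h₁ i hi; have := h₂ i hi
    have : 0 ≤ a * s₁ i + b * s₂ i := by positivity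
    simpa using this
  have hcont : Continuous (A.mulVec : (Fin n → ℝ) → (Fin m → ℝ)) :=
    A.mulVecLin.continuous_of_finiteDimensional
  have hKclosed : IsClosed K :=
    IsClosed.add_left_of_isCompact hCclosed ((isCompact_closedBall 0 r).image hcont)
  have hKconv : Convex ℝ K := by
    refine Convex.add ?_ hCconv
    have := (convex_closedBall (0 : Fin n → ℝ) r).linear_image A.mulVecLin
    exact this
  have hyK : y ∉ K := by
    rintro ⟨a, ⟨x, hx, rfl⟩, s, hs, hsum⟩
    exact hinf ⟨x, by simpa [mem_closedBall_zero_iff] using hx,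
      fun i hi => by
        have h1 : 0 ≤ s i := hs i hi
        have h2 : A.mulVec x i + s i = y i := congrFun hsum i
        linarith⟩
  obtain ⟨f, u, hfy, hfK⟩ := geometric_hahn_banach_point_closed hKconv hKclosed hyK
  set w : Fin m → ℝ := fun i => f (fun j => if i = j then 1 else 0) with hw
  have hf : ∀ z : Fin m → ℝ, f z = ∑ i, z i * w i := by
    intro z
    conv_lhs => rw [pi_eq_sum_univ z]
    rw [map_sum]
    refine Finset.sum_congr rfl fun i _ => ?_
    rw [_root_.map_smul]
    simp [hw, smul_eq_mul]
  -- membership of Ax + single vectors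
  have hmemK : ∀ (x : Fin n → ℝ), ‖x‖ ≤ r → ∀ (s : Fin m → ℝ), (∀ i ∈ J, 0 ≤ s i) →
      A.mulVec x + s ∈ K := by
    intro x hx s hs
    exact ⟨A.mulVec x, ⟨x, by simpa [mem_closedBall_zero_iff] using hx, rfl⟩, s, hs, rfl⟩
  have hsingle : ∀ (i : Fin m) (c : ℝ), (i ∈ J → 0 ≤ c) → u < c * w i := by
    intro i c hc
    have hmem : A.mulVec 0 + (fun j => if i = j then c else 0) ∈ K := by
      refine hmemK 0 (by simp [hr]) _ ?_
      intro j hj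
      by_cases h : i = j
      · subst h; simp [hc hj]
      · simp [h]
    have := hfK _ hmem
    rw [hf] at this
    simpa [Matrix.mulVec_zero, ite_mul, Finset.sum_ite_eq] using this
  have hwJ : ∀ i ∈ J, 0 ≤ w i := by
    intro i hi
    by_contra hneg
    push_neg at hneg
    set c : ℝ := max 0 ((u - 1) / w i) with hc
    have h1 : u < c * w i := hsingle i c (fun _ => le_max_left _ _)
    have h2 : c * w i ≤ (u - 1) / w i * w i :=
      mul_le_mul_of_nonpos_right (le_max_right _ _) hneg.le
    rw [div_mul_cancel₀ _ hneg.ne] at h2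
    linarith
  have hwJc : ∀ i ∉ J, w i = 0 := by
    intro i hi
    by_contra hne
    have h1 : u < (u - 1) / w i * w i := hsingle i _ (fun h => absurd h hi)
    rw [div_mul_cancel₀ _ hne] at h1
    linarith
  have hw0 : ∀ i, 0 ≤ w i := by
    intro i
    by_cases hi : i ∈ J
    · exact hwJ i hi
    · simp [hwJc i hi]
  set N : ℝ := ∑ j, |A.transpose.mulVec w j| with hN
  have hNnn : 0 ≤ N := Finset.sum_nonneg fun j _ => abs_nonneg _
  -- choose the sign vector to get u < -r * N
  have hkey : u < -r * N := by
    set x : Fin n → ℝ := fun j => r * (if 0 ≤ A.transpose.mulVec w j then -1 else 1) with hx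
    have hxn : ‖x‖ ≤ r := by
      refine (pi_norm_le_iff_of_nonneg hr).2 fun j => ?_
      by_cases h : 0 ≤ A.transpose.mulVec w j <;>
        simp [hx, h, abs_mul, abs_of_nonneg hr]
    have hmem : A.mulVec x + 0 ∈ K := hmemK x hxn 0 (by intro i _; simp)
    have h1 := hfK _ hmem
    rw [add_zero, hf] at h1
    have h2 : ∑ i, A.mulVec x i * w i = ∑ j, A.transpose.mulVec w j * x j := by
      have : w ⬝ᵥ A.mulVec x = A.vecMul w ⬝ᵥ x := Matrix.dotProduct_mulVec w A x
      rw [← Matrix.mulVec_transpose] at this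
      simpa [dotProduct, mul_comm] using this
    rw [h2] at h1
    have h3 : ∑ j, A.transpose.mulVec w j * x j = -r * N := by
      have h4 : ∀ j : Fin n, A.transpose.mulVec w j * x j = -r * |A.transpose.mulVec w j| := by
        intro j
        by_cases h : 0 ≤ A.transpose.mulVec w j
        · simp only [hx, if_pos h]
          rw [abs_of_nonneg h]; ring
        · push_neg at h
          simp only [hx, if_neg (not_le.2 h)]
          rw [abs_of_neg h]; ring
      rw [Finset.sum_congr rfl (fun j _ => h4 j), ← Finset.mul_sum]
    rw [h3] at h1
    exact h1
  have hNpos : 0 < N := by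
    rcases lt_or_eq_of_le hNnn with h | h
    · exact h
    · exfalso
      have hker : A.transpose.mulVec w = 0 := by
        funext j
        have : ∀ j ∈ Finset.univ, |A.transpose.mulVec w j| = 0 :=
          (Finset.sum_eq_zero_iff_of_nonneg (fun j _ => abs_nonneg _)).1 h.symm
        simpa [abs_eq_zero] using this j (Finset.mem_univ j)
      have hw0' : w = 0 := pos_ker A J hJ w hw0 hwJc hker
      have hfy0 : f y = 0 := by rw [hf]; simp [hw0']
      rw [hfy0] at hfy
      rw [← h] at hkey
      simp at hkey
      linarith
  refine ⟨fun i => w i / N, fun i => div_nonneg (hw0 i) hNnn, fun i hi => by simp [hwJc i hi], ?_, ?_⟩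
  · have hsm : (fun i => w i / N) = N⁻¹ • w := by
      funext i; simp [div_eq_inv_mul, smul_eq_mul]
    rw [hsm, Matrix.mulVec_smul]
    have : ∀ j : Fin n, |(N⁻¹ • A.transpose.mulVec w) j| = N⁻¹ * |A.transpose.mulVec w j| := by
      intro j
      simp [abs_mul, abs_of_nonneg (inv_nonneg.2 hNnn), smul_eq_mul]
    rw [Finset.sum_congr rfl (fun j _ => this j), ← Finset.mul_sum, ← hN,
      inv_mul_cancel₀ hNpos.ne']
  · have hfy' : ∑ i, y i * w i < -r * N := by rw [← hf]; linarith
    have hdiv : ∑ i, y i * (w i / N) < -r := by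
      have h1 : (∑ i, y i * w i) * N⁻¹ < -r * N * N⁻¹ :=
        mul_lt_mul_of_pos_right hfy' (inv_pos.2 hNpos)
      rw [mul_assoc, mul_inv_cancel₀ hNpos.ne', mul_one] at h1
      calc ∑ i, y i * (w i / N) = (∑ i, y i * w i) * N⁻¹ := by
            rw [Finset.sum_mul]; exact Finset.sum_congr rfl fun i _ => by ring
        _ < -r := h1
    have hbound : -∑ i, y i * (w i / N) ≤ ∑ i, (if i ∈ J ∩ L then w i / N else 0) := by
      rw [← Finset.sum_neg_distrib]
      apply Finset.sum_le_sum
      intro i _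
      by_cases hiJL : i ∈ J ∩ L
      · rw [if_pos hiJL]
        have hvi : 0 ≤ w i / N := div_nonneg (hw0 i) hNnn
        have hyi : -y i ≤ 1 := by
          have := (norm_le_pi_norm y i).trans hy
          rw [Real.norm_eq_abs] at this
          linarith [neg_abs_le (y i)]
        calc -(y i * (w i / N)) = (-y i) * (w i / N) := by ring
          _ ≤ 1 * (w i / N) := mul_le_mul_of_nonneg_right hyi hvi
          _ = w i / N := one_mul _
      · rw [if_neg hiJL]
        by_cases hiJ : i ∈ J
        · have hiL : i ∉ L := fun h => hiJL ⟨hiJ, h⟩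
          simp [hyL i hiL]
        · simp [hwJc i hiJ]
    linarith


/-- Proposition 4, first part: for `A ≠ 0` and all `J ∈ S(A)`,
`H_J(A|L) = max{‖v_{J∩L}‖* : v ∈ ℝ^J_+, ‖A_Jᵀ v‖* ≤ 1}
          = 1 / min{‖A_Jᵀ v‖* : v ∈ ℝ^J_+, ‖v_{J∩L}‖* = 1}`,
where the value is `0` when `J ∩ L = ∅` (in Lean `1/0 = 0`, matching the
convention that the denominator is `+∞` there, since the constraint set is then
empty and `sInf ∅ = 0`).  Vectors in `ℝ^J` are rendered as vectors in `ℝ^m`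
vanishing outside `J`. -/
theorem hoffman_HJ_dual_rest {m n : ℕ} (A : Matrix (Fin m) (Fin n) ℝ)
    (hA : A ≠ 0) (L J : Set (Fin m)) (hJ : ASurj A J) :
    HJL A L J = sSup {t | ∃ v : Fin m → ℝ, (∀ i, 0 ≤ v i) ∧ (∀ i ∉ J, v i = 0) ∧
        dualNorm (A.transpose.mulVec v) ≤ 1 ∧
        t = dualNorm (fun i => if i ∈ J ∩ L then v i else 0)} ∧
    HJL A L J = 1 / sInf {t | ∃ v : Fin m → ℝ, (∀ i, 0 ≤ v i) ∧ (∀ i ∉ J, v i = 0) ∧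
        dualNorm (fun i => if i ∈ J ∩ L then v i else 0) = 1 ∧
        t = dualNorm (A.transpose.mulVec v)} := by
    classical
  obtain ⟨x₀, hx₀⟩ := hJ (fun _ => -1)
  have hM0 : (0:ℝ) ≤ ‖x₀‖ := norm_nonneg _
  set S1 : Set ℝ := {t | ∃ v : Fin m → ℝ, (∀ i, 0 ≤ v i) ∧ (∀ i ∉ J, v i = 0) ∧
        dualNorm (A.transpose.mulVec v) ≤ 1 ∧
        t = dualNorm (fun i => if i ∈ J ∩ L then v i else 0)} with hS1def
  set S2 : Set ℝ := {t | ∃ v : Fin m → ℝ, (∀ i, 0 ≤ v i) ∧ (∀ i ∉ J, v i = 0) ∧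
        dualNorm (fun i => if i ∈ J ∩ L then v i else 0) = 1 ∧
        t = dualNorm (A.transpose.mulVec v)} with hS2def
  have hmask : ∀ v : Fin m → ℝ, (∀ i, 0 ≤ v i) →
      dualNorm (fun i => if i ∈ J ∩ L then v i else 0) = ∑ i, if i ∈ J ∩ L then v i else 0 := by
    intro v hv
    rw [dualNorm_eq_sum_abs]
    refine Finset.sum_congr rfl fun i _ => ?_
    by_cases h : i ∈ J ∩ L <;> simp [h, abs_of_nonneg (hv i)]
  have hdA : ∀ v : Fin m → ℝ, dualNorm (A.transpose.mulVec v) = ∑ j, |A.transpose.mulVec v j| :=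
    fun v => dualNorm_eq_sum_abs _
  have hscaleA : ∀ (c : ℝ), 0 ≤ c → ∀ v : Fin m → ℝ,
      ∑ j, |A.transpose.mulVec (c • v) j| = c * ∑ j, |A.transpose.mulVec v j| := by
    intro c hc v
    rw [Matrix.mulVec_smul, Finset.mul_sum]
    exact Finset.sum_congr rfl fun j _ => by
      simp [Pi.smul_apply, smul_eq_mul, abs_mul, abs_of_nonneg hc]
  have hscalemask : ∀ (c : ℝ) (v : Fin m → ℝ),
      (∑ i, if i ∈ J ∩ L then (c • v) i else 0) = c * ∑ i, (if i ∈ J ∩ L then v i else 0) := by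
    intro c v
    rw [Finset.mul_sum]
    refine Finset.sum_congr rfl fun i _ => ?_
    by_cases h : i ∈ J ∩ L <;> simp [h, Pi.smul_apply, smul_eq_mul]
  -- inner infimum facts
  have hRbdd : ∀ y : Fin m → ℝ,
      BddBelow {r | ∃ x : Fin n → ℝ, (∀ i ∈ J, A.mulVec x i ≤ y i) ∧ r = ‖x‖} :=
    fun y => ⟨0, by rintro r ⟨x, -, rfl⟩; exact norm_nonneg x⟩
  have hRne : ∀ y : Fin m → ℝ,
      ({r | ∃ x : Fin n → ℝ, (∀ i ∈ J, A.mulVec x i ≤ y i) ∧ r = ‖x‖}).Nonempty := by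
    intro y
    obtain ⟨x, hx⟩ := hJ y
    exact ⟨‖x‖, x, hx, rfl⟩
  have hyentry : ∀ y : Fin m → ℝ, ‖y‖ ≤ 1 → ∀ i, -1 ≤ y i ∧ y i ≤ 1 := by
    intro y hy i
    have h := (norm_le_pi_norm y i).trans hy
    rw [Real.norm_eq_abs] at h
    constructor
    · linarith [neg_abs_le (y i)]
    · linarith [le_abs_self (y i)]
  have hμle : ∀ y : Fin m → ℝ, ‖y‖ ≤ 1 →
      sInf {r | ∃ x : Fin n → ℝ, (∀ i ∈ J, A.mulVec x i ≤ y i) ∧ r = ‖x‖} ≤ ‖x₀‖ := by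
    intro y hy
    exact csInf_le (hRbdd y) ⟨x₀, fun i hi => (hx₀ i hi).trans (hyentry y hy i).1, rfl⟩
  -- S1 facts
  have h0S1 : (0:ℝ) ∈ S1 := by
    rw [hS1def]
    refine ⟨0, fun i => le_refl 0, fun i _ => rfl, ?_, ?_⟩
    · rw [hdA]; simp [Matrix.mulVec_zero]
    · rw [hmask 0 fun i => le_refl 0]; simp
  have hS1ub : ∀ t ∈ S1, t ≤ ‖x₀‖ := by
    rw [hS1def]
    rintro t ⟨v, hv0, hvJ, hv1, rfl⟩
    rw [hdA] at hv1
    rw [hmask v hv0]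
    have h1 : ∀ i, v i * A.mulVec x₀ i ≤ -(v i) := by
      intro i
      by_cases hi : i ∈ J
      · calc v i * A.mulVec x₀ i ≤ v i * (-1) :=
            mul_le_mul_of_nonneg_left (hx₀ i hi) (hv0 i)
          _ = -(v i) := by ring
      · simp [hvJ i hi]
    have h2 : ∑ i, v i * A.mulVec x₀ i ≤ -∑ i, v i := by
      rw [← Finset.sum_neg_distrib]
      exact Finset.sum_le_sum fun i _ => h1 i
    rw [dot_trans] at h2
    have h3 := abs_dot_le (A.transpose.mulVec v) x₀
    have h4 := neg_abs_le (∑ j, A.transpose.mulVec v j * x₀ j)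
    have h5 : (∑ j, |A.transpose.mulVec v j|) * ‖x₀‖ ≤ 1 * ‖x₀‖ :=
      mul_le_mul_of_nonneg_right hv1 hM0
    have h6 : ∑ i, (if i ∈ J ∩ L then v i else 0) ≤ ∑ i, v i := by
      refine Finset.sum_le_sum fun i _ => ?_
      by_cases h : i ∈ J ∩ L <;> simp [h, hv0 i]
    linarith
  have hS1bdd : BddAbove S1 := ⟨‖x₀‖, hS1ub⟩
  have hα0 : (0:ℝ) ≤ sSup S1 := le_csSup hS1bdd h0S1
  have hTbdd : BddAbove {t | ∃ y : Fin m → ℝ, (∀ i ∉ L, y i = 0) ∧ ‖y‖ ≤ 1 ∧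
      t = sInf {r | ∃ x : Fin n → ℝ, (∀ i ∈ J, A.mulVec x i ≤ y i) ∧ r = ‖x‖}} := by
    refine ⟨‖x₀‖, ?_⟩
    rintro t ⟨y, hyL, hy, rfl⟩
    exact hμle y hy
  -- Part 1
  have hpart1 : HJL A L J = sSup S1 := by
    rw [HJL]
    refine le_antisymm ?_ ?_
    · refine csSup_le ⟨_, ⟨0, fun i _ => rfl, by simp, rfl⟩⟩ ?_
      rintro t ⟨y, hyL, hy, rfl⟩
      by_contra hlt
      push_neg at hlt
      have hinf : ¬∃ x : Fin n → ℝ, ‖x‖ ≤ sSup S1 ∧ ∀ i ∈ J, A.mulVec x i ≤ y i := by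
        rintro ⟨x, hx1, hx2⟩
        have := csInf_le (hRbdd y) ⟨x, hx2, rfl⟩
        linarith
      obtain ⟨v, hv0, hvJ, hv1, hvgt⟩ := key_sep A L J hJ y hyL hy _ hα0 hinf
      have hm : (∑ i, if i ∈ J ∩ L then v i else 0) ∈ S1 := by
        rw [hS1def]
        exact ⟨v, hv0, hvJ, by rw [hdA]; exact hv1, (hmask v hv0).symm⟩
      have := le_csSup hS1bdd hm
      linarith
    · refine csSup_le ⟨0, h0S1⟩ ?_
      rw [hS1def]
      rintro t ⟨v, hv0, hvJ, hv1, rfl⟩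
      rw [hmask v hv0]
      rw [hdA] at hv1
      set y : Fin m → ℝ := fun i => if i ∈ J ∩ L then (-1:ℝ) else 0 with hydef
      have hyL : ∀ i ∉ L, y i = 0 := by
        intro i hi
        rw [hydef]
        exact if_neg fun h => hi h.2
      have hyn : ‖y‖ ≤ 1 := by
        refine (pi_norm_le_iff_of_nonneg zero_le_one).2 fun i => ?_
        show ‖(if i ∈ J ∩ L then (-1:ℝ) else 0)‖ ≤ 1
        by_cases h : i ∈ J ∩ L
        · rw [if_pos h]; norm_num
        · rw [if_neg h]; norm_num
      refine le_trans ?_ (le_csSup hTbdd ⟨y, hyL, hyn, rfl⟩)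
      refine le_csInf (hRne y) ?_
      rintro r ⟨x, hxf, rfl⟩
      have h1 : ∀ i, v i * A.mulVec x i ≤ v i * y i := by
        intro i
        by_cases hi : i ∈ J
        · exact mul_le_mul_of_nonneg_left (hxf i hi) (hv0 i)
        · simp [hvJ i hi]
      have h2 : ∑ i, v i * A.mulVec x i ≤ ∑ i, v i * y i :=
        Finset.sum_le_sum fun i _ => h1 i
      have h3 : ∑ i, v i * y i = -∑ i, (if i ∈ J ∩ L then v i else 0) := by
        rw [← Finset.sum_neg_distrib]
        refine Finset.sum_congr rfl fun i _ => ?_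
        show v i * (if i ∈ J ∩ L then (-1:ℝ) else 0) = -(if i ∈ J ∩ L then v i else 0)
        by_cases h : i ∈ J ∩ L
        · rw [if_pos h, if_pos h]; ring
        · rw [if_neg h, if_neg h]; ring
      rw [dot_trans] at h2
      have h4 := abs_dot_le (A.transpose.mulVec v) x
      have h5 := neg_abs_le (∑ j, A.transpose.mulVec v j * x j)
      have h6 : (∑ j, |A.transpose.mulVec v j|) * ‖x‖ ≤ 1 * ‖x‖ :=
        mul_le_mul_of_nonneg_right hv1 (norm_nonneg x)
      linarith
  refine ⟨hpart1, ?_⟩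
  -- Part 2
  by_cases hex : ∃ i, i ∈ J ∩ L
  · obtain ⟨i₀, hi₀⟩ := hex
    set e : Fin m → ℝ := fun i => if i = i₀ then 1 else 0 with hedef
    have he0 : ∀ i, 0 ≤ e i := by
      intro i
      by_cases h : i = i₀ <;> simp [hedef, h]
    have heJ : ∀ i ∉ J, e i = 0 := by
      intro i hi
      have hne : i ≠ i₀ := fun h => hi (h ▸ hi₀.1)
      simp [hedef, hne]
    set N₀ : ℝ := ∑ j, |A.transpose.mulVec e j| with hN₀def
    have hN₀nn : 0 ≤ N₀ := Finset.sum_nonneg fun j _ => abs_nonneg _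
    have hN₀pos : 0 < N₀ := by
      rcases lt_or_eq_of_le hN₀nn with h | h
      · exact h
      · exfalso
        have hker : A.transpose.mulVec e = 0 := by
          funext j
          have h' : ∀ j ∈ Finset.univ, |A.transpose.mulVec e j| = 0 :=
            (Finset.sum_eq_zero_iff_of_nonneg fun j _ => abs_nonneg _).1 h.symm
          simpa [abs_eq_zero] using h' j (Finset.mem_univ j)
        have := congrFun (pos_ker A J hJ e he0 heJ hker) i₀
        simp [hedef] at this
    have hmaske : (∑ i, if i ∈ J ∩ L then e i else 0) = 1 := by
      have h' : ∀ i, (if i ∈ J ∩ L then e i else 0) = (if i = i₀ then (1:ℝ) else 0) := by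
        intro i
        by_cases h : i = i₀
        · subst h; simp [hedef, hi₀]
        · by_cases h2 : i ∈ J ∩ L <;> simp [hedef, h, h2]
      rw [Finset.sum_congr rfl fun i _ => h' i]
      simp
    have hαpos : 0 < sSup S1 := by
      have hmem : (N₀⁻¹ : ℝ) ∈ S1 := by
        rw [hS1def]
        refine ⟨N₀⁻¹ • e, fun i => by
            simp only [Pi.smul_apply, smul_eq_mul]
            exact mul_nonneg (inv_nonneg.2 hN₀nn) (he0 i),
          fun i hi => by simp [Pi.smul_apply, heJ i hi], ?_, ?_⟩
        · rw [hdA, hscaleA _ (inv_nonneg.2 hN₀nn), ← hN₀def, inv_mul_cancel₀ hN₀pos.ne']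
        · rw [hmask _ fun i => by
              simp only [Pi.smul_apply, smul_eq_mul]
              exact mul_nonneg (inv_nonneg.2 hN₀nn) (he0 i)]
          rw [hscalemask, hmaske, mul_one]
      exact lt_of_lt_of_le (inv_pos.2 hN₀pos) (le_csSup hS1bdd hmem)
    have hS2bdd : BddBelow S2 := by
      refine ⟨0, ?_⟩
      rw [hS2def]
      rintro t ⟨v, hv0, hvJ, hv1, rfl⟩
      rw [hdA]
      exact Finset.sum_nonneg fun j _ => abs_nonneg _
    have hS2mem : N₀ ∈ S2 := by
      rw [hS2def]
      exact ⟨e, he0, heJ, by rw [hmask e he0]; exact hmaske, by rw [hdA]⟩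
    have hS2lb : ∀ b ∈ S2, (sSup S1)⁻¹ ≤ b := by
      rw [hS2def]
      rintro b ⟨v, hv0, hvJ, hv1, rfl⟩
      rw [hdA]
      rw [hmask v hv0] at hv1
      set b' : ℝ := ∑ j, |A.transpose.mulVec v j| with hb'def
      have hb'nn : 0 ≤ b' := Finset.sum_nonneg fun j _ => abs_nonneg _
      have hb'pos : 0 < b' := by
        rcases lt_or_eq_of_le hb'nn with h | h
        · exact h
        · exfalso
          have hker : A.transpose.mulVec v = 0 := by
            funext j
            have h' : ∀ j ∈ Finset.univ, |A.transpose.mulVec v j| = 0 :=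
              (Finset.sum_eq_zero_iff_of_nonneg fun j _ => abs_nonneg _).1 h.symm
            simpa [abs_eq_zero] using h' j (Finset.mem_univ j)
          have hv00 := pos_ker A J hJ v hv0 hvJ hker
          rw [hv00] at hv1
          simp at hv1
      have hmem : (b'⁻¹ : ℝ) ∈ S1 := by
        rw [hS1def]
        refine ⟨b'⁻¹ • v, fun i => by
            simp only [Pi.smul_apply, smul_eq_mul]
            exact mul_nonneg (inv_nonneg.2 hb'nn) (hv0 i),
          fun i hi => by simp [Pi.smul_apply, hvJ i hi], ?_, ?_⟩
        · rw [hdA, hscaleA _ (inv_nonneg.2 hb'nn), ← hb'def, inv_mul_cancel₀ hb'pos.ne']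
        · rw [hmask _ fun i => by
              simp only [Pi.smul_apply, smul_eq_mul]
              exact mul_nonneg (inv_nonneg.2 hb'nn) (hv0 i)]
          rw [hscalemask, hv1, mul_one]
      have h1 : b'⁻¹ ≤ sSup S1 := le_csSup hS1bdd hmem
      have h2 : (sSup S1)⁻¹ ≤ (b'⁻¹)⁻¹ := by
        apply inv_anti₀ (inv_pos.2 hb'pos) h1
      rwa [inv_inv] at h2
    have hβpos : 0 < sInf S2 :=
      lt_of_lt_of_le (inv_pos.2 hαpos) (le_csInf ⟨N₀, hS2mem⟩ hS2lb)
    have h2 : sSup S1 ≤ (sInf S2)⁻¹ := by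
      refine csSup_le ⟨0, h0S1⟩ ?_
      rw [hS1def]
      rintro t ⟨v, hv0, hvJ, hv1, rfl⟩
      rw [hmask v hv0]
      rw [hdA] at hv1
      set s : ℝ := ∑ i, (if i ∈ J ∩ L then v i else 0) with hsdef
      rcases le_or_gt s 0 with hs | hs
      · exact hs.trans (inv_nonneg.2 hβpos.le)
      · have hmem : (s⁻¹ * ∑ j, |A.transpose.mulVec v j|) ∈ S2 := by
          rw [hS2def]
          refine ⟨s⁻¹ • v, fun i => by
              simp only [Pi.smul_apply, smul_eq_mul]
              exact mul_nonneg (inv_nonneg.2 hs.le) (hv0 i),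
            fun i hi => by simp [Pi.smul_apply, hvJ i hi], ?_, ?_⟩
          · rw [hmask _ fun i => by
                simp only [Pi.smul_apply, smul_eq_mul]
                exact mul_nonneg (inv_nonneg.2 hs.le) (hv0 i)]
            rw [hscalemask, ← hsdef, inv_mul_cancel₀ hs.ne']
          · rw [hdA, hscaleA _ (inv_nonneg.2 hs.le)]
        have h3 : sInf S2 ≤ s⁻¹ * ∑ j, |A.transpose.mulVec v j| := csInf_le hS2bdd hmem
        have h4 : s⁻¹ * ∑ j, |A.transpose.mulVec v j| ≤ s⁻¹ * 1 :=
          mul_le_mul_of_nonneg_left hv1 (inv_nonneg.2 hs.le)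
        rw [mul_one] at h4
        have h5 : sInf S2 ≤ s⁻¹ := h3.trans h4
        have h6 : (s⁻¹)⁻¹ ≤ (sInf S2)⁻¹ := inv_anti₀ hβpos h5
        rwa [inv_inv] at h6
    have h3 : (sInf S2)⁻¹ ≤ sSup S1 := by
      have h4 : (sSup S1)⁻¹ ≤ sInf S2 := le_csInf ⟨N₀, hS2mem⟩ hS2lb
      have h5 := inv_anti₀ (inv_pos.2 hαpos) h4
      rwa [inv_inv] at h5
    rw [hpart1, one_div]
    exact le_antisymm h2 h3
  · push_neg at hex
    have hS2empty : S2 = ∅ := by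
      rw [hS2def]
      ext t
      simp only [Set.mem_setOf_eq, Set.mem_empty_iff_false, iff_false]
      rintro ⟨v, hv0, hvJ, hv1, rfl⟩
      rw [hmask v hv0] at hv1
      have : (∑ i, if i ∈ J ∩ L then v i else 0) = 0 :=
        Finset.sum_eq_zero fun i _ => if_neg (hex i)
      rw [this] at hv1
      exact zero_ne_one hv1
    rw [hpart1, hS2empty, Real.sInf_empty, div_zero]
    refine le_antisymm (csSup_le ⟨0, h0S1⟩ ?_) hα0
    rw [hS1def]
    rintro t ⟨v, hv0, hvJ, hv1, rfl⟩
    rw [hmask v hv0]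
    exact le_of_eq (Finset.sum_eq_zero fun i _ => if_neg (hex i))
end

section
/- Let A ∈ ℝ^{m×n}, C ∈ ℝ^{p×n}, and H := max_{J∈S(A;C)} H_J where H_J := max_{(y,w)∈(Aℝ^n)×ℝ^p, ‖(y,w)‖≤1} min{‖x‖ : Ax = y, C_J x ≤ w_J}. Then for all b ∈ ℝ^m, d ∈ ℝ^p such that {x : Ax = b, Cx ≤ d} is nonempty and all u ∈ ℝ^n, dist(u, {x : Ax = b, Cx ≤ d}) ≤ H · dist((b,d), (Au,Cu) + {0}×ℝ^p_+) ≤ H · ‖(Au−b, (Cu−d)_+)‖. -/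
open Matrix Metric

/-- The set-valued mapping `[A,C,J] : x ↦ (Ax, Cx) + {(0,s) : s_J ≥ 0}` is
relatively surjective: its image is a linear subspace. -/
def RelSurjAC {m p n : ℕ} (A : Matrix (Fin m) (Fin n) ℝ)
    (C : Matrix (Fin p) (Fin n) ℝ) (J : Set (Fin p)) : Prop :=
  ∃ W : Submodule ℝ ((Fin m → ℝ) × (Fin p → ℝ)),
    {q : (Fin m → ℝ) × (Fin p → ℝ) | ∃ x : Fin n → ℝ, ∃ s : Fin p → ℝ,
      (∀ i ∈ J, 0 ≤ s i) ∧ q = (A.mulVec x, C.mulVec x + s)} =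
    (W : Set ((Fin m → ℝ) × (Fin p → ℝ)))

/-- `H_J = max_{(y,w) ∈ (Aℝ^n)×ℝ^p, ‖(y,w)‖≤1} min{‖x‖ : Ax = y, C_J x ≤ w_J}`. -/
noncomputable def HJAC {m p n : ℕ} (A : Matrix (Fin m) (Fin n) ℝ)
    (C : Matrix (Fin p) (Fin n) ℝ) (J : Set (Fin p)) : ℝ :=
  sSup {t | ∃ yw : (Fin m → ℝ) × (Fin p → ℝ), (∃ x, yw.1 = A.mulVec x) ∧ ‖yw‖ ≤ 1 ∧
    t = sInf {r | ∃ x : Fin n → ℝ, A.mulVec x = yw.1 ∧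
      (∀ i ∈ J, C.mulVec x i ≤ yw.2 i) ∧ r = ‖x‖}}

/-- `H = max_{J ∈ S(A;C)} H_J`. -/
noncomputable def HoffAC {m p n : ℕ} (A : Matrix (Fin m) (Fin n) ℝ)
    (C : Matrix (Fin p) (Fin n) ℝ) : ℝ :=
  sSup {t | ∃ J : Set (Fin p), RelSurjAC A C J ∧ t = HJAC A C J}


open Finset Pointwise

section Cone
variable {G : Type*} [Fintype G] {E : Type*} [NormedAddCommGroup E] [NormedSpace ℝ E]

lemma cara_aux (w : G → E) : ∀ (k : ℕ) (c : G → ℝ), (∀ g, 0 ≤ c g) →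
    (Finset.univ.filter fun g => c g ≠ 0).card ≤ k →
    ∃ T : Finset G, LinearIndependent ℝ (fun g : T => w g) ∧
      ∃ c' : G → ℝ, (∀ g, 0 ≤ c' g) ∧ (∀ g, g ∉ T → c' g = 0) ∧
        ∑ g, c' g • w g = ∑ g, c g • w g := by
  classical
  intro k
  induction k with
  | zero =>
    intro c hc hcard
    refine ⟨∅, linearIndependent_empty_type, c, hc, fun g hg => ?_, rfl⟩
    by_contra hne
    have : g ∈ Finset.univ.filter fun g => c g ≠ 0 := by simp [hne]
    have := Finset.card_pos.mpr ⟨g, this⟩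
    omega
  | succ k ih =>
    intro c hc hcard
    set S : Finset G := Finset.univ.filter fun g => c g ≠ 0 with hS
    by_cases hli : LinearIndependent ℝ (fun g : S => w g)
    · refine ⟨S, hli, c, hc, fun g hg => ?_, rfl⟩
      by_contra hne
      exact hg (by simp [hS, hne])
    · obtain ⟨d, hdsum, i₀, hdi₀⟩ := Fintype.not_linearIndependent_iff.mp hli
      -- WLOG some coordinate of d is positive
      obtain ⟨d, hdsum, i₀, hdi₀⟩ : ∃ d : S → ℝ, ∑ i, d i • w i = 0 ∧ ∃ i, 0 < d i := by
        rcases lt_or_gt_of_ne hdi₀ with h | h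
        · refine ⟨-d, ?_, i₀, by simpa using h⟩
          simp only [Pi.neg_apply, neg_smul]
          rw [Finset.sum_neg_distrib, hdsum, neg_zero]
        · exact ⟨d, hdsum, i₀, h⟩
      set dd : G → ℝ := fun g => if h : g ∈ S then d ⟨g, h⟩ else 0 with hdd
      have hddsum : ∑ g, dd g • w g = 0 := by
        rw [← Finset.sum_subset (Finset.subset_univ S) (by intro g _ hg; simp [hdd, hg])]
        rw [← Finset.sum_attach S fun g => dd g • w g]
        simpa [hdd] using hdsum
      set F : Finset G := S.filter fun g => 0 < dd g with hF
      have hFne : F.Nonempty := ⟨i₀, by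
        simp only [hF, Finset.mem_filter]
        exact ⟨i₀.2, by simp [hdd, i₀.2, hdi₀]⟩⟩
      obtain ⟨g₀, hg₀F, hg₀min⟩ := F.exists_min_image (fun g => c g / dd g) hFne
      have hddg₀ : 0 < dd g₀ := (Finset.mem_filter.mp hg₀F).2
      set t : ℝ := c g₀ / dd g₀ with ht
      have htnn : 0 ≤ t := div_nonneg (hc g₀) hddg₀.le
      set c'' : G → ℝ := fun g => c g - t * dd g with hc''
      have hc''nn : ∀ g, 0 ≤ c'' g := by
        intro g
        by_cases hgS : g ∈ S
        · by_cases hpos : 0 < dd g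
          · have hgF : g ∈ F := Finset.mem_filter.mpr ⟨hgS, hpos⟩
            have := hg₀min g hgF
            have h2 : t * dd g ≤ c g / dd g * dd g :=
              mul_le_mul_of_nonneg_right this hpos.le
            rw [div_mul_cancel₀ _ hpos.ne'] at h2
            simp only [hc'']; linarith
          · push_neg at hpos
            have : t * dd g ≤ 0 := mul_nonpos_of_nonneg_of_nonpos htnn hpos
            simp only [hc'']; have := hc g; linarith
        · have h1 : c g = 0 := by by_contra hne; exact hgS (by simp [hS, hne])
          have h2 : dd g = 0 := by simp [hdd, hgS]
          simp [hc'', h1, h2]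
      have hc''g₀ : c'' g₀ = 0 := by
        simp only [hc'', ht]
        field_simp
        ring
      have hsub : (Finset.univ.filter fun g => c'' g ≠ 0) ⊆ S.erase g₀ := by
        intro g hg
        simp only [Finset.mem_filter] at hg
        refine Finset.mem_erase.mpr ⟨fun h => hg.2 (h ▸ hc''g₀), ?_⟩
        by_contra hgS
        have h1 : c g = 0 := by by_contra hne; exact hgS (by simp [hS, hne])
        have h2 : dd g = 0 := by simp [hdd, hgS]
        exact hg.2 (by simp [hc'', h1, h2])
      have hcard' : (Finset.univ.filter fun g => c'' g ≠ 0).card ≤ k := by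
        have h1 : (S.erase g₀).card < S.card :=
          Finset.card_erase_lt_of_mem (Finset.mem_filter.mp hg₀F).1
        have h2 := Finset.card_le_card hsub
        omega
      obtain ⟨T, hT, c', h1, h2, h3⟩ := ih c'' hc''nn hcard'
      refine ⟨T, hT, c', h1, h2, ?_⟩
      rw [h3]
      have : ∑ g, c'' g • w g = ∑ g, c g • w g - t • ∑ g, dd g • w g := by
        rw [Finset.smul_sum, ← Finset.sum_sub_distrib]
        congr 1; funext g
        simp [hc'', sub_smul, smul_smul]
      rw [this, hddsum, smul_zero, sub_zero]

lemma fg_cone_closed [FiniteDimensional ℝ E] (w : G → E) :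
    IsClosed {z : E | ∃ c : G → ℝ, (∀ g, 0 ≤ c g) ∧ z = ∑ g, c g • w g} := by
  classical
  have hset : {z : E | ∃ c : G → ℝ, (∀ g, 0 ≤ c g) ∧ z = ∑ g, c g • w g} =
      ⋃ T : {T : Finset G // LinearIndependent ℝ (fun g : T => w g)},
        (Fintype.linearCombination ℝ (fun g : T.1 => w g)) '' {c | ∀ g, 0 ≤ c g} := by
    ext z
    simp only [Set.mem_setOf_eq, Set.mem_iUnion, Set.mem_image]
    constructor
    · rintro ⟨c, hc, rfl⟩
      obtain ⟨T, hT, c', h1, h2, h3⟩ := cara_aux w _ c hc le_rfl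
      refine ⟨⟨T, hT⟩, fun g : T => c' g, fun g => h1 g, ?_⟩
      rw [Fintype.linearCombination_apply, ← h3]
      rw [← Finset.sum_subset (Finset.subset_univ T) (by intro g _ hg; simp [h2 g hg])]
      exact (Finset.sum_attach T fun g => c' g • w g)
    · rintro ⟨T, c, hc, rfl⟩
      refine ⟨fun g => if h : g ∈ T.1 then c ⟨g, h⟩ else 0, fun g => ?_, ?_⟩
      · by_cases h : g ∈ T.1 <;> simp [h, hc]
      rw [Fintype.linearCombination_apply]
      rw [← Finset.sum_subset (Finset.subset_univ T.1) (by intro g _ hg; simp [hg])]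
      rw [← Finset.sum_attach T.1 fun g => (if h : g ∈ T.1 then c ⟨g, h⟩ else 0) • w g]
      exact (Finset.sum_congr rfl fun g _ => by simp [g.2]).symm
  rw [hset]
  apply isClosed_iUnion_of_finite
  rintro ⟨T, hT⟩
  have hinj : LinearMap.ker (Fintype.linearCombination ℝ (fun g : T => w g)) = ⊥ := by
    rw [LinearMap.ker_eq_bot']
    intro c hc
    rw [Fintype.linearCombination_apply] at hc
    exact funext (Fintype.linearIndependent_iff.mp hT c hc)
  have hemb := LinearMap.isClosedEmbedding_of_injective hinj
  have hcl : IsClosed {c : ({g // g ∈ T} → ℝ) | ∀ g, 0 ≤ c g} := by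
    have : {c : ({g // g ∈ T} → ℝ) | ∀ g, 0 ≤ c g} = ⋂ g, {c | 0 ≤ c g} := by
      ext c; simp [Set.mem_iInter]
    rw [this]
    exact isClosed_iInter fun g => isClosed_le continuous_const (continuous_apply g)
  exact hemb.isClosedMap _ hcl

end Cone

theorem farkas {ι κ : Type*} [Fintype ι] [Fintype κ] (a : ι → κ → ℝ) (q : ι → ℝ)
    (h : ¬ ∃ x : κ → ℝ, ∀ i, ∑ j, a i j * x j ≤ q i) :
    ∃ ν : ι → ℝ, (∀ i, 0 ≤ ν i) ∧ (∀ j, ∑ i, ν i * a i j = 0) ∧ ∑ i, ν i * q i < 0 := by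
  classical
  set w : (κ ⊕ κ ⊕ ι) → (ι → ℝ) := Sum.elim (fun j => fun i => a i j)
    (Sum.elim (fun j => fun i => -a i j) (fun i₀ => Pi.single i₀ 1)) with hw
  set S : Set (ι → ℝ) := {z | ∃ c : (κ ⊕ κ ⊕ ι) → ℝ, (∀ g, 0 ≤ c g) ∧ z = ∑ g, c g • w g}
    with hSdef
  have hgen : ∀ g₀, w g₀ ∈ S := by
    intro g₀
    refine ⟨fun g => if g = g₀ then 1 else 0,
      fun g => by by_cases hgg : g = g₀ <;> simp [hgg], ?_⟩
    rw [Finset.sum_congr rfl (fun g (_ : g ∈ Finset.univ) => by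
      rw [ite_smul, one_smul, zero_smul])]
    rw [Finset.sum_ite_eq' Finset.univ g₀ w]
    simp
  have hscale : ∀ t : ℝ, 0 ≤ t → ∀ z ∈ S, t • z ∈ S := by
    rintro t ht z ⟨c, hc, rfl⟩
    refine ⟨fun g => t * c g, fun g => mul_nonneg ht (hc g), ?_⟩
    rw [Finset.smul_sum]
    exact Finset.sum_congr rfl fun g _ => (smul_smul t (c g) (w g))
  have hconv : Convex ℝ S := by
    rintro z ⟨c, hc, rfl⟩ z' ⟨c', hc', rfl⟩ s t hs ht hst
    refine ⟨fun g => s * c g + t * c' g,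
      fun g => add_nonneg (mul_nonneg hs (hc g)) (mul_nonneg ht (hc' g)), ?_⟩
    rw [Finset.smul_sum, Finset.smul_sum, ← Finset.sum_add_distrib]
    exact Finset.sum_congr rfl fun g _ => by
      rw [smul_smul, smul_smul, add_smul]
  have hclosed : IsClosed S := fg_cone_closed w
  have hqS : q ∉ S := by
    rintro ⟨c, hc, hq⟩
    apply h
    refine ⟨fun j => c (Sum.inl j) - c (Sum.inr (Sum.inl j)), fun i => ?_⟩
    have hqi := congrFun hq i
    rw [Finset.sum_apply] at hqi
    simp only [Pi.smul_apply, smul_eq_mul, hw, Fintype.sum_sum_type, Sum.elim_inl,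
      Sum.elim_inr, Pi.single_apply, mul_ite, mul_one, mul_zero] at hqi
    rw [Finset.sum_ite_eq Finset.univ i (fun x => c (Sum.inr (Sum.inr x)))] at hqi
    simp only [Finset.mem_univ, if_true] at hqi
    have hsplit : ∑ j, a i j * (c (Sum.inl j) - c (Sum.inr (Sum.inl j))) =
        ∑ j, c (Sum.inl j) * a i j + ∑ j, c (Sum.inr (Sum.inl j)) * -a i j := by
      rw [← Finset.sum_add_distrib]
      exact Finset.sum_congr rfl fun j _ => by ring
    have := hc (Sum.inr (Sum.inr i))
    rw [hsplit]; linarith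
  obtain ⟨f, u, hfq, hfS⟩ := geometric_hahn_banach_point_closed hconv hclosed hqS
  have h0S : (0 : ι → ℝ) ∈ S := ⟨0, fun g => le_rfl, by simp⟩
  have hu0 : u < 0 := by have := hfS 0 h0S; simpa using this
  have hfnn : ∀ z ∈ S, 0 ≤ f z := by
    intro z hz
    by_contra hneg
    push_neg at hneg
    have htpos : 0 < (|u| + 1) / (-f z) := div_pos (by positivity) (by linarith)
    have h1 := hfS _ (hscale _ htpos.le z hz)
    rw [f.map_smul, smul_eq_mul] at h1
    have h2 : (|u| + 1) / (-f z) * f z = -(|u| + 1) := by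
      rw [div_mul_eq_mul_div, div_eq_iff (by linarith : -f z ≠ 0)]
      ring
    rw [h2] at h1
    have := neg_abs_le u
    linarith
  have hexp : ∀ z : ι → ℝ, f z = ∑ i, z i * f (Pi.single i 1) := by
    intro z
    have hz : z = ∑ i, z i • (Pi.single i (1 : ℝ) : ι → ℝ) := by
      funext i'
      rw [Finset.sum_apply]
      simp [Pi.single_apply]
    conv_lhs => rw [hz]
    rw [map_sum]
    exact Finset.sum_congr rfl fun i _ => by rw [f.map_smul, smul_eq_mul]
  refine ⟨fun i => f (Pi.single i 1), fun i => ?_, fun j => ?_, ?_⟩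
  · exact hfnn (Pi.single i 1) (hgen (Sum.inr (Sum.inr i)))
  · have hp : 0 ≤ f (fun i => a i j) := hfnn _ (hgen (Sum.inl j))
    have hn : 0 ≤ f (fun i => -a i j) := hfnn _ (hgen (Sum.inr (Sum.inl j)))
    have hneg : (fun i => -a i j) = -(fun i => a i j) := rfl
    rw [hneg, map_neg] at hn
    have hzero : f (fun i => a i j) = 0 := le_antisymm (by linarith) hp
    have := hexp (fun i => a i j)
    rw [hzero] at this
    rw [Finset.sum_congr rfl fun i (_ : i ∈ Finset.univ) => mul_comm (f (Pi.single i 1)) (a i j)]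
    exact this.symm
  · have := hexp q
    rw [Finset.sum_congr rfl fun i (_ : i ∈ Finset.univ) => mul_comm (f (Pi.single i 1)) (q i)]
    rw [← this]
    linarith

namespace HoffWork

variable {m p n : ℕ} (A : Matrix (Fin m) (Fin n) ℝ) (C : Matrix (Fin p) (Fin n) ℝ)

/-- The defining set of `HJAC`. -/
def HJset (J : Set (Fin p)) : Set ℝ :=
  {t | ∃ yw : (Fin m → ℝ) × (Fin p → ℝ), (∃ x, yw.1 = A.mulVec x) ∧ ‖yw‖ ≤ 1 ∧
    t = sInf {r | ∃ x : Fin n → ℝ, A.mulVec x = yw.1 ∧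
      (∀ i ∈ J, C.mulVec x i ≤ yw.2 i) ∧ r = ‖x‖}}

lemma HJAC_eq (J : Set (Fin p)) : HJAC A C J = sSup (HJset A C J) := rfl

/-- Given a recession certificate, from any starting point we can satisfy the
`J`-inequalities at any level while keeping `A x` fixed. -/
lemma feas_point {J : Set (Fin p)} {xh : Fin n → ℝ} (h1 : A.mulVec xh = 0)
    (h2 : ∀ i ∈ J, C.mulVec xh i ≤ -1) (x₀ : Fin n → ℝ) (v : Fin p → ℝ) :
    A.mulVec (x₀ + (∑ i, max (C.mulVec x₀ i - v i) 0) • xh) = A.mulVec x₀ ∧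
    ∀ i ∈ J, C.mulVec (x₀ + (∑ i, max (C.mulVec x₀ i - v i) 0) • xh) i ≤ v i := by
  set τ : ℝ := ∑ i, max (C.mulVec x₀ i - v i) 0 with hτ
  have hτnn : 0 ≤ τ := Finset.sum_nonneg fun i _ => le_max_right _ _
  have hτi : ∀ i, C.mulVec x₀ i - v i ≤ τ := fun i =>
    le_trans (le_max_left _ _) (Finset.single_le_sum
      (f := fun i => max (C.mulVec x₀ i - v i) 0) (fun i _ => le_max_right _ _)
      (Finset.mem_univ i))
  constructor
  · rw [Matrix.mulVec_add, Matrix.mulVec_smul, h1, smul_zero, add_zero]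
  · intro i hi
    have : C.mulVec (x₀ + τ • xh) i = C.mulVec x₀ i + τ * C.mulVec xh i := by
      rw [Matrix.mulVec_add, Matrix.mulVec_smul]
      simp
    rw [this]
    have h3 : τ * C.mulVec xh i ≤ τ * (-1) :=
      mul_le_mul_of_nonneg_left (h2 i hi) hτnn
    have := hτi i
    linarith

lemma rs_of_cert {J : Set (Fin p)} (xh : Fin n → ℝ) (h1 : A.mulVec xh = 0)
    (h2 : ∀ i ∈ J, C.mulVec xh i ≤ -1) : RelSurjAC A C J := by
  refine ⟨(LinearMap.range A.mulVecLin).prod ⊤, ?_⟩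
  ext q
  constructor
  · rintro ⟨x, s, hs, rfl⟩
    exact ⟨⟨x, by simp [Matrix.mulVecLin_apply]⟩, trivial⟩
  · rintro ⟨⟨x₀, hx₀⟩, -⟩
    rw [Matrix.mulVecLin_apply] at hx₀
    obtain ⟨hA, hC⟩ := feas_point A C h1 h2 x₀ q.2
    set x := x₀ + (∑ i, max (C.mulVec x₀ i - q.2 i) 0) • xh with hx
    refine ⟨x, q.2 - C.mulVec x, fun i hi => by simpa using hC i hi, ?_⟩
    have : C.mulVec x + (q.2 - C.mulVec x) = q.2 := by abel
    rw [this, hA, hx₀]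

lemma cert_of_rs {J : Set (Fin p)} (h : RelSurjAC A C J) :
    ∃ xh : Fin n → ℝ, A.mulVec xh = 0 ∧ ∀ i ∈ J, C.mulVec xh i ≤ -1 := by
  obtain ⟨W, hW⟩ := h
  have h1 : ((0, 1) : (Fin m → ℝ) × (Fin p → ℝ)) ∈ (W : Set _) := by
    rw [← hW]
    exact ⟨0, 1, fun i _ => zero_le_one, by simp⟩
  have h2 : ((0, -1) : (Fin m → ℝ) × (Fin p → ℝ)) ∈ (W : Set _) := by
    have := W.neg_mem h1
    simpa using this
  rw [← hW] at h2
  obtain ⟨x, s, hs, heq⟩ := h2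
  have hA : A.mulVec x = 0 := (congrArg Prod.fst heq).symm
  have hC : C.mulVec x + s = -1 := (congrArg Prod.snd heq).symm
  refine ⟨x, hA, fun i hi => ?_⟩
  have := congrFun hC i
  have hsi := hs i hi
  simp only [Pi.add_apply, Pi.neg_apply, Pi.one_apply] at this
  linarith

lemma rs_empty : RelSurjAC A C (∅ : Set (Fin p)) :=
  rs_of_cert A C 0 (by simp) (fun i hi => absurd hi (Set.notMem_empty i))

lemma solve_of_rs {J : Set (Fin p)} (h : RelSurjAC A C J) (x₀ : Fin n → ℝ)
    (v : Fin p → ℝ) : ∃ x, A.mulVec x = A.mulVec x₀ ∧ ∀ i ∈ J, C.mulVec x i ≤ v i := by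
  obtain ⟨xh, h1, h2⟩ := cert_of_rs A C h
  obtain ⟨hA, hC⟩ := feas_point A C h1 h2 x₀ v
  exact ⟨_, hA, hC⟩

lemma hjset_nonneg (J : Set (Fin p)) : ∀ t ∈ HJset A C J, 0 ≤ t := by
  rintro t ⟨yw, -, -, rfl⟩
  exact Real.sInf_nonneg (by rintro r ⟨x, -, -, rfl⟩; exact norm_nonneg x)

lemma zero_mem_hjset (J : Set (Fin p)) : (0 : ℝ) ∈ HJset A C J := by
  refine ⟨(0, 0), ⟨0, by simp⟩, by simp, ?_⟩
  have hmem : (0 : ℝ) ∈ {r | ∃ x : Fin n → ℝ, A.mulVec x = ((0, 0) :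
      (Fin m → ℝ) × (Fin p → ℝ)).1 ∧ (∀ i ∈ J, C.mulVec x i ≤ ((0, 0) :
      (Fin m → ℝ) × (Fin p → ℝ)).2 i) ∧ r = ‖x‖} :=
    ⟨0, by simp, fun i _ => by simp, by simp⟩
  refine le_antisymm (le_csInf ⟨0, hmem⟩ ?_)
    (csInf_le ⟨0, by rintro r ⟨x, -, -, rfl⟩; exact norm_nonneg x⟩ hmem)
  rintro r ⟨x, -, -, rfl⟩; exact norm_nonneg x

lemma hjset_bddAbove {J : Set (Fin p)} (h : RelSurjAC A C J) :
    BddAbove (HJset A C J) := by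
  classical
  obtain ⟨xh, h1, h2⟩ := cert_of_rs A C h
  -- a bounded linear right inverse of A on its range
  obtain ⟨g, hg⟩ := LinearMap.exists_rightInverse_of_surjective
    (A.mulVecLin.rangeRestrict) (LinearMap.range_rangeRestrict _)
  set G := LinearMap.toContinuousLinearMap g with hG
  set B₁ : ℝ := ∑ i : Fin p, ((∑ j, |C i j|) * ‖G‖ + 1) with hB₁
  refine ⟨‖G‖ + B₁ * ‖xh‖, ?_⟩
  rintro t ⟨yw, ⟨x', hx'⟩, hnorm, rfl⟩
  have hy : yw.1 ∈ LinearMap.range A.mulVecLin := ⟨x', by rw [Matrix.mulVecLin_apply, hx']⟩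
  set x₀ : Fin n → ℝ := g ⟨yw.1, hy⟩ with hx₀
  have hAx₀ : A.mulVec x₀ = yw.1 := by
    have h0 := LinearMap.congr_fun hg ⟨yw.1, hy⟩
    have := congrArg Subtype.val h0
    simpa [Matrix.mulVecLin_apply] using this
  have hx₀n : ‖x₀‖ ≤ ‖G‖ := by
    have := G.le_opNorm ⟨yw.1, hy⟩
    have hyw1 : ‖(⟨yw.1, hy⟩ : LinearMap.range A.mulVecLin)‖ ≤ 1 :=
      le_trans (by exact_mod_cast le_refl ‖yw.1‖) (le_trans (norm_fst_le yw) hnorm)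
    calc ‖x₀‖ = ‖G ⟨yw.1, hy⟩‖ := rfl
    _ ≤ ‖G‖ * ‖(⟨yw.1, hy⟩ : LinearMap.range A.mulVecLin)‖ := this
    _ ≤ ‖G‖ * 1 := by
        exact mul_le_mul_of_nonneg_left hyw1 (norm_nonneg G)
    _ = ‖G‖ := mul_one _
  obtain ⟨hA, hC⟩ := feas_point A C h1 h2 x₀ yw.2
  set τ : ℝ := ∑ i, max (C.mulVec x₀ i - yw.2 i) 0 with hτ
  have hτle : τ ≤ B₁ := by
    apply Finset.sum_le_sum
    intro i _
    have hwi : -1 ≤ yw.2 i := by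
      have : |yw.2 i| ≤ ‖yw.2‖ := by
        have := norm_le_pi_norm yw.2 i
        simpa [Real.norm_eq_abs] using this
      have h2n : ‖yw.2‖ ≤ 1 := le_trans (norm_snd_le yw) hnorm
      have := abs_le.mp (le_trans this h2n)
      linarith [this.1]
    have hCx₀ : C.mulVec x₀ i ≤ (∑ j, |C i j|) * ‖G‖ := by
      have : C.mulVec x₀ i ≤ ∑ j, |C i j| * ‖x₀‖ := by
        rw [Matrix.mulVec, dotProduct]
        apply Finset.sum_le_sum
        intro j _
        have hxj : x₀ j ≤ |x₀ j| := le_abs_self _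
        have hxn : |x₀ j| ≤ ‖x₀‖ := by
          have := norm_le_pi_norm x₀ j
          simpa [Real.norm_eq_abs] using this
        calc C i j * x₀ j ≤ |C i j * x₀ j| := le_abs_self _
        _ = |C i j| * |x₀ j| := abs_mul _ _
        _ ≤ |C i j| * ‖x₀‖ := mul_le_mul_of_nonneg_left hxn (abs_nonneg _)
      calc C.mulVec x₀ i ≤ ∑ j, |C i j| * ‖x₀‖ := this
      _ = (∑ j, |C i j|) * ‖x₀‖ := by rw [Finset.sum_mul]
      _ ≤ (∑ j, |C i j|) * ‖G‖ := mul_le_mul_of_nonneg_left hx₀n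
          (Finset.sum_nonneg fun j _ => abs_nonneg _)
    have : C.mulVec x₀ i - yw.2 i ≤ (∑ j, |C i j|) * ‖G‖ + 1 := by linarith
    exact max_le this (by positivity)
  have hτnn : 0 ≤ τ := Finset.sum_nonneg fun i _ => le_max_right _ _
  have hbnd : ‖x₀ + τ • xh‖ ≤ ‖G‖ + B₁ * ‖xh‖ := by
    calc ‖x₀ + τ • xh‖ ≤ ‖x₀‖ + ‖τ • xh‖ := norm_add_le _ _
    _ = ‖x₀‖ + τ * ‖xh‖ := by rw [norm_smul, Real.norm_eq_abs, abs_of_nonneg hτnn]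
    _ ≤ ‖G‖ + B₁ * ‖xh‖ := add_le_add hx₀n
        (mul_le_mul_of_nonneg_right hτle (norm_nonneg xh))
  exact le_trans (csInf_le ⟨0, by rintro r ⟨x, -, -, rfl⟩; exact norm_nonneg x⟩
    ⟨x₀ + τ • xh, by rw [hA, hAx₀], hC, rfl⟩) hbnd


lemma hoffset_finite :
    ({t | ∃ J : Set (Fin p), RelSurjAC A C J ∧ t = HJAC A C J}).Finite := by
  have hsub : {t | ∃ J : Set (Fin p), RelSurjAC A C J ∧ t = HJAC A C J} ⊆
      (HJAC A C) '' Set.univ := by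
    rintro t ⟨J, -, rfl⟩; exact ⟨J, trivial, rfl⟩
  exact (Set.finite_univ.image _).subset hsub

lemma hjac_le_hoff {J : Set (Fin p)} (hJ : RelSurjAC A C J) :
    HJAC A C J ≤ HoffAC A C :=
  le_csSup (hoffset_finite A C).bddAbove ⟨J, hJ, rfl⟩

lemma hjac_nonneg {J : Set (Fin p)} (hJ : RelSurjAC A C J) : 0 ≤ HJAC A C J :=
  le_csSup (hjset_bddAbove A C hJ) (zero_mem_hjset A C J)

lemma hoff_nonneg : 0 ≤ HoffAC A C :=
  le_trans (hjac_nonneg A C (rs_empty A C)) (hjac_le_hoff A C (rs_empty A C))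

lemma sInf_le_hjac {J : Set (Fin p)} (hJ : RelSurjAC A C J) (y : Fin m → ℝ)
    (w : Fin p → ℝ) (hy : ∃ x', y = A.mulVec x') :
    sInf {r | ∃ x, A.mulVec x = y ∧ (∀ i ∈ J, C.mulVec x i ≤ w i) ∧ r = ‖x‖}
      ≤ HJAC A C J * ‖((y, w) : (Fin m → ℝ) × (Fin p → ℝ))‖ := by
  obtain ⟨x', hx'⟩ := hy
  set r₀ : ℝ := ‖((y, w) : (Fin m → ℝ) × (Fin p → ℝ))‖ with hr₀def
  rcases eq_or_lt_of_le (norm_nonneg ((y, w) : (Fin m → ℝ) × (Fin p → ℝ))) with h0 | hr₀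
  · -- r₀ = 0
    have hz : ((y, w) : (Fin m → ℝ) × (Fin p → ℝ)) = 0 := norm_eq_zero.mp h0.symm
    have hy0 : y = 0 := congrArg Prod.fst hz
    have hw0 : w = 0 := congrArg Prod.snd hz
    have : sInf {r | ∃ x, A.mulVec x = y ∧ (∀ i ∈ J, C.mulVec x i ≤ w i) ∧ r = ‖x‖} ≤ 0 := by
      apply csInf_le ⟨0, by rintro r ⟨x, -, -, rfl⟩; exact norm_nonneg x⟩
      exact ⟨0, by simp [hy0], fun i _ => by simp [hw0], norm_zero.symm⟩
    calc sInf _ ≤ 0 := this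
    _ = HJAC A C J * r₀ := by rw [hr₀def, ← h0, mul_zero]
  · -- r₀ > 0
    set yw : (Fin m → ℝ) × (Fin p → ℝ) := r₀⁻¹ • ((y, w) : (Fin m → ℝ) × (Fin p → ℝ))
      with hywdef
    have hinv : (0:ℝ) ≤ r₀⁻¹ := inv_nonneg.mpr hr₀.le
    have hset : {r | ∃ x, A.mulVec x = y ∧ (∀ i ∈ J, C.mulVec x i ≤ w i) ∧ r = ‖x‖}
        = r₀ • {r | ∃ x : Fin n → ℝ, A.mulVec x = yw.1 ∧
          (∀ i ∈ J, C.mulVec x i ≤ yw.2 i) ∧ r = ‖x‖} := by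
      ext r
      simp only [Set.mem_smul_set, Set.mem_setOf_eq]
      constructor
      · rintro ⟨x, hx, hC, rfl⟩
        refine ⟨‖r₀⁻¹ • x‖, ⟨r₀⁻¹ • x, ?_, ?_, rfl⟩, ?_⟩
        · rw [Matrix.mulVec_smul, hx]; rfl
        · intro i hi
          have h1 : (C.mulVec (r₀⁻¹ • x)) i = r₀⁻¹ * C.mulVec x i := by
            rw [Matrix.mulVec_smul]; rfl
          have h2 : yw.2 i = r₀⁻¹ * w i := rfl
          rw [h1, h2]
          exact mul_le_mul_of_nonneg_left (hC i hi) hinv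
        · rw [norm_smul, Real.norm_eq_abs, abs_of_nonneg hinv, smul_eq_mul,
            ← mul_assoc, mul_inv_cancel₀ hr₀.ne', one_mul]
      · rintro ⟨r', ⟨x, hx, hC, rfl⟩, rfl⟩
        refine ⟨r₀ • x, ?_, ?_, ?_⟩
        · rw [Matrix.mulVec_smul, hx]
          show r₀ • (r₀⁻¹ • y) = y
          rw [smul_smul, mul_inv_cancel₀ hr₀.ne', one_smul]
        · intro i hi
          have h1 : (C.mulVec (r₀ • x)) i = r₀ * C.mulVec x i := by
            rw [Matrix.mulVec_smul]; rfl
          have h2 := mul_le_mul_of_nonneg_left (hC i hi) hr₀.le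
          rw [h1]
          calc r₀ * C.mulVec x i ≤ r₀ * (yw.2 i) := h2
          _ = r₀ * (r₀⁻¹ * w i) := rfl
          _ = w i := by rw [← mul_assoc, mul_inv_cancel₀ hr₀.ne', one_mul]
        · rw [norm_smul, Real.norm_eq_abs, abs_of_nonneg hr₀.le, smul_eq_mul]
    rw [hset, Real.sInf_smul_of_nonneg hr₀.le, smul_eq_mul]
    have hmem : sInf {r | ∃ x : Fin n → ℝ, A.mulVec x = yw.1 ∧
        (∀ i ∈ J, C.mulVec x i ≤ yw.2 i) ∧ r = ‖x‖} ∈ HJset A C J := by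
      refine ⟨yw, ⟨r₀⁻¹ • x', ?_⟩, ?_, rfl⟩
      · show r₀⁻¹ • y = A.mulVec (r₀⁻¹ • x')
        rw [Matrix.mulVec_smul, hx']
      · rw [hywdef, norm_smul, Real.norm_eq_abs, abs_of_nonneg hinv, ← hr₀def,
          inv_mul_cancel₀ hr₀.ne']
    have hle := le_csSup (hjset_bddAbove A C hJ) hmem
    rw [HJAC_eq]
    calc r₀ * sInf {r | ∃ x : Fin n → ℝ, A.mulVec x = yw.1 ∧
        (∀ i ∈ J, C.mulVec x i ≤ yw.2 i) ∧ r = ‖x‖}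
        ≤ r₀ * sSup (HJset A C J) := mul_le_mul_of_nonneg_left hle hr₀.le
    _ = sSup (HJset A C J) * r₀ := mul_comm _ _


/-- Main combinatorial lemma: there is a relatively surjective `J` such that the
minimum norm over the full system is a lower bound for the `J`-subsystem. -/
lemma exists_rs_minimal (y : Fin m → ℝ) (D : Fin p → ℝ)
    (hT : ∃ x, A.mulVec x = y ∧ ∀ i, C.mulVec x i ≤ D i) :
    ∃ J : Set (Fin p), RelSurjAC A C J ∧
      ∀ x, A.mulVec x = y → (∀ i ∈ J, C.mulVec x i ≤ D i) →
        sInf {r | ∃ x', A.mulVec x' = y ∧ (∀ i, C.mulVec x' i ≤ D i) ∧ r = ‖x'‖} ≤ ‖x‖ := by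
  classical
  obtain ⟨xf, hxfA, hxfC⟩ := hT
  set M : ℝ := sInf {r | ∃ x', A.mulVec x' = y ∧ (∀ i, C.mulVec x' i ≤ D i) ∧ r = ‖x'‖}
    with hM
  by_cases hM0 : M ≤ 0
  · exact ⟨∅, rs_empty A C, fun x _ _ => le_trans hM0 (norm_nonneg x)⟩
  push_neg at hM0
  set P : Finset (Fin p) → Prop := fun J =>
    ∀ x, A.mulVec x = y → (∀ i ∈ J, C.mulVec x i ≤ D i) → M ≤ ‖x‖ with hP
  have hbdd : BddBelow {r | ∃ x', A.mulVec x' = y ∧ (∀ i, C.mulVec x' i ≤ D i) ∧ r = ‖x'‖} :=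
    ⟨0, by rintro r ⟨x, -, -, rfl⟩; exact norm_nonneg x⟩
  have hPuniv : P Finset.univ := by
    intro x hxA hxC
    exact csInf_le hbdd ⟨x, hxA, fun i => hxC i (Finset.mem_univ i), rfl⟩
  set 𝒮 : Finset (Finset (Fin p)) := Finset.univ.filter P with h𝒮
  have h𝒮ne : 𝒮.Nonempty :=
    ⟨Finset.univ, Finset.mem_filter.mpr ⟨Finset.mem_univ _, hPuniv⟩⟩
  obtain ⟨J, hJ𝒮, hJmin⟩ := 𝒮.exists_min_image Finset.card h𝒮ne
  have hPJ : P J := (Finset.mem_filter.mp hJ𝒮).2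
  have hmin : ∀ i ∈ J, ¬ P (J.erase i) := by
    intro i hi hPe
    have hmem : J.erase i ∈ 𝒮 := Finset.mem_filter.mpr ⟨Finset.mem_univ _, hPe⟩
    have := hJmin _ hmem
    have := Finset.card_erase_lt_of_mem hi
    omega
  refine ⟨↑J, ?_, fun x hx hC => hPJ x hx (fun i hi => hC i hi)⟩
  by_contra hnotRS
  have hnc : ¬ ∃ xh, A.mulVec xh = 0 ∧ ∀ i ∈ (↑J : Set (Fin p)), C.mulVec xh i ≤ -1 :=
    fun ⟨xh, h1, h2⟩ => hnotRS (rs_of_cert A C xh h1 h2)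
  -- Farkas certificate (lam, mu) for infeasibility of the homogeneous system
  obtain ⟨ν, hν0, hνcol, hνq⟩ := farkas
    (ι := (Fin m ⊕ Fin m ⊕ {i // i ∈ J})) (κ := Fin n)
    (Sum.elim (fun t j => A t j) (Sum.elim (fun t j => -A t j) (fun i j => C i.1 j)))
    (Sum.elim 0 (Sum.elim 0 (fun _ => -1)))
    (by
      rintro ⟨x, hx⟩
      apply hnc
      refine ⟨x, ?_, ?_⟩
      · funext t
        have h1 := hx (Sum.inl t)
        have h2 := hx (Sum.inr (Sum.inl t))
        simp only [Sum.elim_inl, Sum.elim_inr, Pi.zero_apply, neg_mul] at h1 h2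
        rw [Finset.sum_neg_distrib] at h2
        have h3 : A.mulVec x t = ∑ j, A t j * x j := rfl
        simp only [Pi.zero_apply]
        rw [h3]; linarith
      · intro i hi
        have h3 := hx (Sum.inr (Sum.inr ⟨i, hi⟩))
        exact (by simpa using h3 : ∑ j, C i j * x j ≤ -1))
  set lam : Fin p → ℝ := fun i => if h : i ∈ J then ν (Sum.inr (Sum.inr ⟨i, h⟩)) else 0
    with hlam
  set mu : Fin m → ℝ := fun t => ν (Sum.inl t) - ν (Sum.inr (Sum.inl t)) with hmu
  have hlam0 : ∀ i, 0 ≤ lam i := by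
    intro i
    by_cases h : i ∈ J
    · simp only [hlam, dif_pos h]; exact hν0 _
    · simp [hlam, h]
  have hlamJ : ∀ i ∈ J, i ∉ J.filter (fun i => 0 < lam i) → lam i = 0 := by
    intro i hi hni
    have h1 : ¬ 0 < lam i := fun h => hni (Finset.mem_filter.mpr ⟨hi, h⟩)
    have := hlam0 i
    linarith
  have hlamsum : 0 < ∑ i ∈ J, lam i := by
    rw [Fintype.sum_sum_type, Fintype.sum_sum_type] at hνq
    simp only [Sum.elim_inl, Sum.elim_inr, Pi.zero_apply, mul_zero, Finset.sum_const_zero,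
      zero_add, mul_neg, mul_one] at hνq
    have hsum : ∑ i ∈ J, lam i = ∑ i : {i // i ∈ J}, ν (Sum.inr (Sum.inr i)) := by
      rw [Finset.univ_eq_attach, ← Finset.sum_attach J (fun i => lam i)]
      refine Finset.sum_congr rfl fun i _ => ?_
      simp only [hlam, dif_pos i.2]
    rw [hsum]
    rw [Finset.sum_neg_distrib] at hνq
    linarith
  have hcol : ∀ j, ∑ t, mu t * A t j + ∑ i ∈ J, lam i * C i j = 0 := by
    intro j
    have hthis := hνcol j
    rw [Fintype.sum_sum_type, Fintype.sum_sum_type] at hthis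
    simp only [Sum.elim_inl, Sum.elim_inr] at hthis
    have hsum : ∑ i ∈ J, lam i * C i j =
        ∑ i : {i // i ∈ J}, ν (Sum.inr (Sum.inr i)) * C i.1 j := by
      rw [Finset.univ_eq_attach, ← Finset.sum_attach J (fun i => lam i * C i j)]
      refine Finset.sum_congr rfl fun i _ => ?_
      simp only [hlam, dif_pos i.2]
    have hmusplit : ∑ t, mu t * A t j =
        ∑ t, ν (Sum.inl t) * A t j - ∑ t, ν (Sum.inr (Sum.inl t)) * A t j := by
      rw [← Finset.sum_sub_distrib]
      exact Finset.sum_congr rfl fun t _ => by simp only [hmu]; ring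
    have hneg : ∑ t, ν (Sum.inr (Sum.inl t)) * -A t j
        = - ∑ t, ν (Sum.inr (Sum.inl t)) * A t j := by
      rw [← Finset.sum_neg_distrib]
      exact Finset.sum_congr rfl fun t _ => by ring
    rw [hneg] at hthis
    rw [hsum, hmusplit]
    linarith
  have hkey : ∀ x : Fin n → ℝ, A.mulVec x = y →
      ∑ i ∈ J, lam i * C.mulVec x i = - ∑ t, mu t * y t := by
    intro x hxA
    have h1 : ∑ i ∈ J, lam i * C.mulVec x i = ∑ j, (∑ i ∈ J, lam i * C i j) * x j := by
      have hterm : ∀ i, lam i * C.mulVec x i = ∑ j, lam i * C i j * x j := by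
        intro i
        have h : C.mulVec x i = ∑ j, C i j * x j := rfl
        rw [h, Finset.mul_sum]
        exact Finset.sum_congr rfl fun j _ => by ring
      rw [Finset.sum_congr rfl fun i _ => hterm i, Finset.sum_comm]
      exact Finset.sum_congr rfl fun j _ => by rw [Finset.sum_mul]
    have h2 : ∑ t, mu t * y t = ∑ j, (∑ t, mu t * A t j) * x j := by
      have hterm : ∀ t, mu t * y t = ∑ j, mu t * A t j * x j := by
        intro t
        have h : y t = ∑ j, A t j * x j := by rw [← hxA]; rfl
        rw [h, Finset.mul_sum]
        exact Finset.sum_congr rfl fun j _ => by ring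
      rw [Finset.sum_congr rfl fun t _ => hterm t, Finset.sum_comm]
      exact Finset.sum_congr rfl fun j _ => by rw [Finset.sum_mul]
    rw [h1, h2, ← Finset.sum_neg_distrib]
    refine Finset.sum_congr rfl fun j _ => ?_
    have hj := hcol j
    have hcc : (∑ i ∈ J, lam i * C i j) = -(∑ t, mu t * A t j) := by linarith
    rw [hcc]; ring
  set c : ℝ := - ∑ t, mu t * y t with hc
  set gam : ℝ := ∑ i ∈ J, lam i * D i - c with hgamdef
  have hgam : 0 ≤ gam := by
    have h1 := hkey xf hxfA
    have h2 : ∑ i ∈ J, lam i * C.mulVec xf i ≤ ∑ i ∈ J, lam i * D i :=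
      Finset.sum_le_sum fun i _ => mul_le_mul_of_nonneg_left (hxfC i) (hlam0 i)
    rw [hgamdef, hc]; linarith
  set I : Finset (Fin p) := J.filter (fun i => 0 < lam i) with hI
  have hIJ : I ⊆ J := Finset.filter_subset _ _
  have hIne : I.Nonempty := by
    by_contra hne
    rw [Finset.not_nonempty_iff_eq_empty] at hne
    have hzero : ∑ i ∈ J, lam i = 0 := Finset.sum_eq_zero (fun i hi => by
      by_contra h0
      have h1 : 0 < lam i := lt_of_le_of_ne (hlam0 i) (Ne.symm h0)
      have h2 : i ∈ I := Finset.mem_filter.mpr ⟨hi, h1⟩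
      rw [hne] at h2
      exact absurd h2 (Finset.notMem_empty i))
    linarith
  have hlamIpos : ∀ i ∈ I, 0 < lam i := fun i hi => (Finset.mem_filter.mp hi).2
  -- the family z i of better points for the erased systems
  have hz : ∀ i ∈ J, ∃ x, A.mulVec x = y ∧ (∀ k ∈ J.erase i, C.mulVec x k ≤ D k)
      ∧ ‖x‖ < M := by
    intro i hi
    by_contra hcon
    push_neg at hcon
    refine hmin i hi (fun x hx1 hx2 => ?_)
    have := hcon x hx1 hx2
    exact not_lt.mp (fun hlt => (not_lt.mpr this) hlt)
  choose! z hz1 hz2 hz3 using hz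
  have hviol : ∀ i ∈ J, D i < C.mulVec (z i) i := by
    intro i hi
    by_contra hle
    push_neg at hle
    have hall : ∀ k ∈ J, C.mulVec (z i) k ≤ D k := by
      intro k hk
      by_cases hki : k = i
      · rw [hki]; exact hle
      · exact hz2 i hi k (Finset.mem_erase.mpr ⟨hki, hk⟩)
    exact absurd (hPJ (z i) (hz1 i hi) hall) (not_le.mpr (hz3 i hi))
  set B : Fin p → Fin p → ℝ := fun i k => C.mulVec (z k) i - D i with hB
  have hBdiag : ∀ i ∈ J, 0 < B i i := fun i hi => by
    simp only [hB]; linarith [hviol i hi]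
  have hBoff : ∀ i ∈ J, ∀ k ∈ J, i ≠ k → B i k ≤ 0 := by
    intro i hi k hk hik
    simp only [hB]
    linarith [hz2 k hk i (Finset.mem_erase.mpr ⟨hik, hi⟩)]
  have hcolsum : ∀ k ∈ J, ∑ i ∈ I, lam i * B i k = -gam := by
    intro k hk
    have hJsum : ∑ i ∈ J, lam i * B i k = -gam := by
      have h1 := hkey (z k) (hz1 k hk)
      have hsplit : ∑ i ∈ J, lam i * B i k =
          ∑ i ∈ J, lam i * C.mulVec (z k) i - ∑ i ∈ J, lam i * D i := by
        rw [← Finset.sum_sub_distrib]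
        exact Finset.sum_congr rfl fun i _ => by simp only [hB]; ring
      rw [hsplit, h1, hgamdef]; ring
    rw [← hJsum]
    exact Finset.sum_subset hIJ (fun i hi hni => by rw [hlamJ i hi hni, zero_mul])
  -- Fact F : a nonzero nonnegative combination making all I-rows nonpositive
  have halpha : ∃ α : Fin p → ℝ, (∀ k, 0 ≤ α k) ∧ (0 < ∑ k ∈ I, α k) ∧
      (∀ i ∈ I, ∑ k ∈ I, α k * B i k ≤ 0) := by
    by_contra hno
    push_neg at hno
    obtain ⟨ν', hν'0, hν'col, hν'q⟩ := farkas
      (ι := ({i // i ∈ I} ⊕ {k // k ∈ I} ⊕ Unit)) (κ := {k // k ∈ I})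
      (Sum.elim (fun i k => B i.1 k.1)
        (Sum.elim (fun i k => if i = k then -1 else 0) (fun _ k => -1)))
      (Sum.elim 0 (Sum.elim 0 (fun _ => -1)))
      (by
        rintro ⟨α', hα'⟩
        have hα'0 : ∀ k : {k // k ∈ I}, 0 ≤ α' k := by
          intro k
          have h1 := hα' (Sum.inr (Sum.inl k))
          simp only [Sum.elim_inl, Sum.elim_inr, Pi.zero_apply] at h1
          rw [Finset.sum_congr rfl (fun k' (_ : k' ∈ Finset.univ) => by
            rw [ite_mul, neg_one_mul, zero_mul] :
            ∀ k' ∈ Finset.univ, (if k = k' then (-1:ℝ) else 0) * α' k'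
              = if k = k' then -α' k' else 0)] at h1
          rw [Finset.sum_ite_eq Finset.univ k (fun k' => -α' k')] at h1
          simp only [Finset.mem_univ, if_true] at h1
          linarith
        have hα'sum : 1 ≤ ∑ k : {k // k ∈ I}, α' k := by
          have h1 := hα' (Sum.inr (Sum.inr ()))
          simp only [Sum.elim_inl, Sum.elim_inr, neg_one_mul] at h1
          rw [Finset.sum_neg_distrib] at h1
          linarith
        set α : Fin p → ℝ := fun k => if h : k ∈ I then α' ⟨k, h⟩ else 0 with hα
        have hconv : ∀ f : Fin p → ℝ, ∑ k ∈ I, α k * f k = ∑ k : {k // k ∈ I}, α' k * f k.1 := by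
          intro f
          rw [Finset.univ_eq_attach, ← Finset.sum_attach I (fun k => α k * f k)]
          refine Finset.sum_congr rfl fun k _ => ?_
          simp only [hα, dif_pos k.2]
        have hα0 : ∀ k, 0 ≤ α k := by
          intro k
          by_cases h : k ∈ I
          · simp only [hα, dif_pos h]; exact hα'0 _
          · simp [hα, h]
        have hαsum : 0 < ∑ k ∈ I, α k := by
          have := hconv (fun _ => 1)
          simp only [mul_one] at this
          rw [this]; linarith
        obtain ⟨i, hiI, hipos⟩ := hno α hα0 hαsum
        have hle : ∑ k ∈ I, α k * B i k ≤ 0 := by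
          rw [hconv (fun k => B i k)]
          have h1 := hα' (Sum.inl ⟨i, hiI⟩)
          simp only [Sum.elim_inl, Pi.zero_apply] at h1
          calc ∑ k : {k // k ∈ I}, α' k * B i k.1
              = ∑ k : {k // k ∈ I}, B i k.1 * α' k :=
                Finset.sum_congr rfl fun k _ => mul_comm _ _
          _ ≤ 0 := h1
        linarith)
    -- extract the contradiction from the dual certificate
    have htv : 0 < ν' (Sum.inr (Sum.inr ())) := by
      rw [Fintype.sum_sum_type, Fintype.sum_sum_type] at hν'q
      simp only [Sum.elim_inl, Sum.elim_inr, Pi.zero_apply, mul_zero,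
        Finset.sum_const_zero, zero_add, mul_neg, mul_one] at hν'q
      rw [Finset.sum_neg_distrib] at hν'q
      have : ∑ x : Unit, ν' (Sum.inr (Sum.inr x)) = ν' (Sum.inr (Sum.inr ())) := by
        simp
      rw [this] at hν'q
      linarith
    set tv : ℝ := ν' (Sum.inr (Sum.inr ())) with htvdef
    set yv : {i // i ∈ I} → ℝ := fun i => ν' (Sum.inl i) with hyv
    have hcol' : ∀ k : {k // k ∈ I}, ∑ i : {i // i ∈ I}, yv i * B i.1 k.1
        = ν' (Sum.inr (Sum.inl k)) + tv := by
      intro k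
      have h1 := hν'col k
      rw [Fintype.sum_sum_type, Fintype.sum_sum_type] at h1
      simp only [Sum.elim_inl, Sum.elim_inr] at h1
      have h2 : ∑ i : {i // i ∈ I}, ν' (Sum.inr (Sum.inl i)) * (if i = k then (-1:ℝ) else 0)
          = -ν' (Sum.inr (Sum.inl k)) := by
        rw [Finset.sum_congr rfl (fun i (_ : i ∈ Finset.univ) => by
          rw [mul_ite, mul_neg_one, mul_zero] :
          ∀ i ∈ Finset.univ, ν' (Sum.inr (Sum.inl i)) * (if i = k then (-1:ℝ) else 0)
            = if i = k then -ν' (Sum.inr (Sum.inl i)) else 0)]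
        rw [Finset.sum_ite_eq' Finset.univ k (fun i => -ν' (Sum.inr (Sum.inl i)))]
        simp
      rw [h2] at h1
      have h3 : ∑ x : Unit, ν' (Sum.inr (Sum.inr x)) * (-1) = -tv := by simp [htvdef]
      rw [h3] at h1
      simp only [hyv]
      linarith
    -- choose j minimizing yv / lam over I
    have hune : (Finset.univ : Finset {i // i ∈ I}).Nonempty := by
      obtain ⟨i, hi⟩ := hIne
      exact ⟨⟨i, hi⟩, Finset.mem_univ _⟩
    obtain ⟨j, -, hjmin⟩ := Finset.exists_min_image Finset.univ
      (fun i : {i // i ∈ I} => yv i / lam i.1) hune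
    set cmin : ℝ := yv j / lam j.1 with hcmin
    have hcmin0 : 0 ≤ cmin := div_nonneg (hν'0 _) (hlamIpos _ j.2).le
    set muv : {i // i ∈ I} → ℝ := fun i => yv i - cmin * lam i.1 with hmuv
    have hmuv0 : ∀ i, 0 ≤ muv i := by
      intro i
      have h1 := hjmin i (Finset.mem_univ i)
      have h2 : 0 < lam i.1 := hlamIpos _ i.2
      have h3 : cmin * lam i.1 ≤ yv i := (le_div_iff₀ h2).mp h1
      simp only [hmuv]; linarith
    have hmuvj : muv j = 0 := by
      simp only [hmuv, hcmin]
      rw [div_mul_cancel₀ _ (hlamIpos _ j.2).ne']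
      ring
    -- the contradiction at column j
    have hS1 : ∑ i : {i // i ∈ I}, muv i * B i.1 j.1
        = (ν' (Sum.inr (Sum.inl j)) + tv) + cmin * gam := by
      have hsplit : ∑ i : {i // i ∈ I}, muv i * B i.1 j.1
          = ∑ i : {i // i ∈ I}, yv i * B i.1 j.1
            - cmin * ∑ i : {i // i ∈ I}, lam i.1 * B i.1 j.1 := by
        rw [Finset.mul_sum, ← Finset.sum_sub_distrib]
        exact Finset.sum_congr rfl fun i _ => by simp only [hmuv]; ring
      have hlamsub : ∑ i : {i // i ∈ I}, lam i.1 * B i.1 j.1 = -gam := by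
        rw [Finset.univ_eq_attach]
        rw [Finset.sum_attach I (fun i => lam i * B i j.1)]
        exact hcolsum j.1 (hIJ j.2)
      rw [hsplit, hlamsub, hcol' j]
      ring
    have hS2 : ∑ i : {i // i ∈ I}, muv i * B i.1 j.1 ≤ 0 := by
      apply Finset.sum_nonpos
      intro i _
      by_cases hij : i = j
      · rw [hij, hmuvj, zero_mul]
      · have hBij : B i.1 j.1 ≤ 0 := hBoff i.1 (hIJ i.2) j.1 (hIJ j.2)
          (fun hh => hij (Subtype.ext hh))
        exact mul_nonpos_of_nonneg_of_nonpos (hmuv0 i) hBij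
    have := hν'0 (Sum.inr (Sum.inl j))
    have : 0 < (ν' (Sum.inr (Sum.inl j)) + tv) + cmin * gam := by positivity
    linarith
  -- use α to build a contradiction with P J
  obtain ⟨α, hα0, hαsum, hαB⟩ := halpha
  set s : ℝ := ∑ k ∈ I, α k with hs
  set β : Fin p → ℝ := fun k => α k / s with hβ
  have hβ0 : ∀ k, 0 ≤ β k := fun k => div_nonneg (hα0 k) hαsum.le
  have hβsum : ∑ k ∈ I, β k = 1 := by
    simp only [hβ]
    rw [← Finset.sum_div]
    exact div_self hαsum.ne'
  set zb : Fin n → ℝ := ∑ k ∈ I, β k • z k with hzb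
  have hzbA : A.mulVec zb = y := by
    have h1 : A.mulVecLin zb = ∑ k ∈ I, β k • A.mulVecLin (z k) := by
      rw [hzb, map_sum]
      exact Finset.sum_congr rfl fun k _ => by rw [_root_.map_smul]
    have h2 : A.mulVecLin zb = ∑ k ∈ I, β k • y := by
      rw [h1]
      refine Finset.sum_congr rfl fun k hk => ?_
      rw [Matrix.mulVecLin_apply, hz1 k (hIJ hk)]
    have h3 : A.mulVec zb = A.mulVecLin zb := rfl
    rw [h3, h2, ← Finset.sum_smul, hβsum, one_smul]
  have hzbC : ∀ i, C.mulVec zb i = ∑ k ∈ I, β k * C.mulVec (z k) i := by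
    intro i
    have h1 : C.mulVecLin zb = ∑ k ∈ I, β k • C.mulVecLin (z k) := by
      rw [hzb, map_sum]
      exact Finset.sum_congr rfl fun k _ => by rw [_root_.map_smul]
    have h2 : C.mulVec zb i = (∑ k ∈ I, β k • C.mulVecLin (z k)) i := by
      rw [← h1]; rfl
    rw [h2, Finset.sum_apply]
    exact Finset.sum_congr rfl fun k _ => rfl
  have hzbfeas : ∀ i ∈ J, C.mulVec zb i ≤ D i := by
    intro i hi
    have h1 : C.mulVec zb i - D i = ∑ k ∈ I, β k * B i k := by
      rw [hzbC i]
      have h2 : ∑ k ∈ I, β k * B i k = ∑ k ∈ I, (β k * C.mulVec (z k) i - β k * D i) := by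
        refine Finset.sum_congr rfl fun k _ => ?_
        simp only [hB]; ring
      rw [h2, Finset.sum_sub_distrib, ← Finset.sum_mul, hβsum, one_mul]
    by_cases hiI : i ∈ I
    · have h3 : ∑ k ∈ I, β k * B i k ≤ 0 := by
        have h4 := hαB i hiI
        have h5 : ∑ k ∈ I, β k * B i k = (∑ k ∈ I, α k * B i k) / s := by
          rw [Finset.sum_div]
          exact Finset.sum_congr rfl fun k _ => by simp only [hβ]; ring
        rw [h5]
        exact div_nonpos_of_nonpos_of_nonneg h4 hαsum.le
      linarith
    · have h3 : ∑ k ∈ I, β k * B i k ≤ 0 := by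
        apply Finset.sum_nonpos
        intro k hk
        have hik : i ≠ k := fun hh => hiI (hh ▸ hk)
        exact mul_nonpos_of_nonneg_of_nonpos (hβ0 k)
          (hBoff i hi k (hIJ hk) hik)
      linarith
  have hzbnorm : ‖zb‖ < M := by
    obtain ⟨k₀, hk₀⟩ := hIne
    have hβk₀ : 0 < ∑ k ∈ I, β k := by rw [hβsum]; norm_num
    have h1 : ‖zb‖ ≤ ∑ k ∈ I, β k * ‖z k‖ := by
      rw [hzb]
      refine le_trans (norm_sum_le _ _) (le_of_eq ?_)
      refine Finset.sum_congr rfl fun k _ => ?_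
      rw [norm_smul, Real.norm_eq_abs, abs_of_nonneg (hβ0 k)]
    have h2 : ∑ k ∈ I, β k * ‖z k‖ < ∑ k ∈ I, β k * M := by
      -- all terms ≤, and strict somewhere having positive weight
      obtain ⟨k₁, hk₁I, hk₁pos⟩ : ∃ k ∈ I, 0 < β k := by
        by_contra hcon
        push_neg at hcon
        have : ∑ k ∈ I, β k ≤ 0 := Finset.sum_nonpos (fun k hk =>
          le_antisymm (hcon k hk) (hβ0 k) ▸ le_rfl)
        rw [hβsum] at this; linarith
      refine Finset.sum_lt_sum (fun k hk => mul_le_mul_of_nonneg_left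
        (hz3 k (hIJ hk)).le (hβ0 k)) ⟨k₁, hk₁I, ?_⟩
      exact mul_lt_mul_of_pos_left (hz3 k₁ (hIJ hk₁I)) hk₁pos
    have h3 : ∑ k ∈ I, β k * M = M := by
      rw [← Finset.sum_mul, hβsum, one_mul]
    linarith
  exact absurd (hPJ zb hzbA hzbfeas) (not_le.mpr hzbnorm)


end HoffWork

open HoffWork in
/-- Proposition 5, bound part: for all `b, d` with
`{x : Ax = b, Cx ≤ d} ≠ ∅` and all `u`,
`dist(u, {x : Ax = b, Cx ≤ d}) ≤ H · dist((b,d), (Au,Cu) + {0}×ℝ^p_+)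
  ≤ H · ‖(Au−b, (Cu−d)_+)‖`. -/
theorem hoffman_eq_ineq_bound {m p n : ℕ} (A : Matrix (Fin m) (Fin n) ℝ)
    (C : Matrix (Fin p) (Fin n) ℝ) (b : Fin m → ℝ) (d : Fin p → ℝ)
    (hP : {x : Fin n → ℝ | A.mulVec x = b ∧ ∀ i, C.mulVec x i ≤ d i}.Nonempty)
    (u : Fin n → ℝ) :
    infDist u {x : Fin n → ℝ | A.mulVec x = b ∧ ∀ i, C.mulVec x i ≤ d i} ≤
      HoffAC A C * infDist (b, d)
        {q : (Fin m → ℝ) × (Fin p → ℝ) | ∃ s : Fin p → ℝ,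
          (∀ i, 0 ≤ s i) ∧ q = (A.mulVec u, C.mulVec u + s)} ∧
    HoffAC A C * infDist (b, d)
        {q : (Fin m → ℝ) × (Fin p → ℝ) | ∃ s : Fin p → ℝ,
          (∀ i, 0 ≤ s i) ∧ q = (A.mulVec u, C.mulVec u + s)} ≤
      HoffAC A C *
        ‖((A.mulVec u - b, fun i => max (C.mulVec u i - d i) 0) :
          (Fin m → ℝ) × (Fin p → ℝ))‖ := by
  classical
  set P : Set (Fin n → ℝ) := {x | A.mulVec x = b ∧ ∀ i, C.mulVec x i ≤ d i} with hPdef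
  set K : Set ((Fin m → ℝ) × (Fin p → ℝ)) := {q | ∃ s : Fin p → ℝ,
    (∀ i, 0 ≤ s i) ∧ q = (A.mulVec u, C.mulVec u + s)} with hKdef
  obtain ⟨x₀, hx₀A, hx₀C⟩ := hP
  have hKne : K.Nonempty := ⟨(A.mulVec u, C.mulVec u + 0), 0, fun i => le_rfl, rfl⟩
  set H : ℝ := HoffAC A C with hH
  have hHnn : 0 ≤ H := hoff_nonneg A C
  set r : ℝ := infDist (b, d) K with hr
  have hrnn : 0 ≤ r := infDist_nonneg
  constructor
  · -- main inequality
    have hmain : ∀ ε : ℝ, 0 < ε → infDist u P ≤ H * r + H * ε := by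
      intro ε hε
      obtain ⟨q, hqK, hqdist⟩ := (infDist_lt_iff hKne).mp
        (show infDist (b, d) K < r + ε by rw [← hr]; linarith)
      obtain ⟨sb, hsb0, hq⟩ := hqK
      set y : Fin m → ℝ := b - A.mulVec u with hy
      set D : Fin p → ℝ := fun i => d i - C.mulVec u i with hD
      set w : Fin p → ℝ := fun i => d i - C.mulVec u i - sb i with hw
      have hsubA : ∀ x' : Fin n → ℝ, A.mulVec (x' - u) = A.mulVec x' - A.mulVec u :=
        fun x' => A.mulVecLin.map_sub x' u
      have hsubC : ∀ x' : Fin n → ℝ, C.mulVec (x' - u) = C.mulVec x' - C.mulVec u :=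
        fun x' => C.mulVecLin.map_sub x' u
      have hT : ∃ x, A.mulVec x = y ∧ ∀ i, C.mulVec x i ≤ D i := by
        refine ⟨x₀ - u, by rw [hsubA, hx₀A], fun i => ?_⟩
        rw [hsubC]
        simp only [Pi.sub_apply, hD]
        linarith [hx₀C i]
      obtain ⟨J, hJRS, hJlb⟩ := exists_rs_minimal A C y D hT
      have hyr : ∃ x', y = A.mulVec x' := ⟨x₀ - u, by rw [hsubA, hx₀A]⟩
      -- chain of inequalities
      have h1 : infDist u P ≤
          sInf {r' | ∃ x', A.mulVec x' = y ∧ (∀ i, C.mulVec x' i ≤ D i) ∧ r' = ‖x'‖} := by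
        apply le_csInf
        · exact ⟨‖x₀ - u‖, x₀ - u, by rw [hsubA, hx₀A], fun i => by
            rw [hsubC]; simp only [Pi.sub_apply, hD]; linarith [hx₀C i], rfl⟩
        · rintro r' ⟨x', hxA, hxC, rfl⟩
          have hmem : u + x' ∈ P := by
            constructor
            · have : A.mulVec (u + x') = A.mulVec u + A.mulVec x' :=
                A.mulVecLin.map_add u x'
              rw [this, hxA, hy]; abel
            · intro i
              have : C.mulVec (u + x') = C.mulVec u + C.mulVec x' :=
                C.mulVecLin.map_add u x'
              rw [this]
              simp only [Pi.add_apply]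
              have := hxC i
              simp only [hD] at this
              linarith
          calc infDist u P ≤ dist u (u + x') := infDist_le_dist_of_mem hmem
          _ = ‖u - (u + x')‖ := dist_eq_norm _ _
          _ = ‖x'‖ := by rw [show u - (u + x') = -x' by abel, norm_neg]
      have h2 : sInf {r' | ∃ x', A.mulVec x' = y ∧ (∀ i, C.mulVec x' i ≤ D i) ∧ r' = ‖x'‖}
          ≤ sInf {r' | ∃ x, A.mulVec x = y ∧ (∀ i ∈ J, C.mulVec x i ≤ w i) ∧ r' = ‖x‖} := by
        apply le_csInf
        · obtain ⟨xw, hxwA, hxwC⟩ := solve_of_rs A C hJRS (x₀ - u) w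
          exact ⟨‖xw‖, xw, by rw [hxwA, hsubA, hx₀A], hxwC, rfl⟩
        · rintro r' ⟨x, hxA, hxC, rfl⟩
          refine hJlb x hxA (fun i hi => ?_)
          have := hxC i hi
          simp only [hw] at this
          simp only [hD]
          linarith [hsb0 i]
      have h3 : sInf {r' | ∃ x, A.mulVec x = y ∧ (∀ i ∈ J, C.mulVec x i ≤ w i) ∧ r' = ‖x‖}
          ≤ HJAC A C J * ‖((y, w) : (Fin m → ℝ) × (Fin p → ℝ))‖ :=
        sInf_le_hjac A C hJRS y w hyr
      have hnw : ‖((y, w) : (Fin m → ℝ) × (Fin p → ℝ))‖ = dist (b, d) q := by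
        rw [dist_eq_norm, hq]
        congr 1
        refine Prod.ext rfl ?_
        show w = d - (C.mulVec u + sb)
        funext i
        simp only [hw, Pi.sub_apply, Pi.add_apply]
        ring
      have h4 : HJAC A C J * ‖((y, w) : (Fin m → ℝ) × (Fin p → ℝ))‖ ≤
          HJAC A C J * (r + ε) := by
        apply mul_le_mul_of_nonneg_left _ (hjac_nonneg A C hJRS)
        rw [hnw]
        exact hqdist.le
      have h5 : HJAC A C J * (r + ε) ≤ H * (r + ε) :=
        mul_le_mul_of_nonneg_right (hjac_le_hoff A C hJRS) (by linarith)
      calc infDist u P ≤ _ := h1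
      _ ≤ _ := h2
      _ ≤ _ := h3
      _ ≤ _ := h4
      _ ≤ H * (r + ε) := h5
      _ = H * r + H * ε := by ring
    by_cases hH0 : H = 0
    · have := hmain 1 one_pos
      rw [hH0] at this ⊢
      simpa using this
    · have hHpos : 0 < H := lt_of_le_of_ne hHnn (Ne.symm hH0)
      refine le_of_forall_pos_le_add (fun ε' hε' => ?_)
      have := hmain (ε' / H) (div_pos hε' hHpos)
      rw [mul_div_cancel₀ _ hHpos.ne'] at this
      exact this
  · -- second inequality
    set s₀ : Fin p → ℝ := fun i => max (d i - C.mulVec u i) 0 with hs₀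
    have hq₀K : ((A.mulVec u, C.mulVec u + s₀) : (Fin m → ℝ) × (Fin p → ℝ)) ∈ K :=
      ⟨s₀, fun i => le_max_right _ _, rfl⟩
    have hdist : infDist (b, d) K ≤
        ‖((A.mulVec u - b, fun i => max (C.mulVec u i - d i) 0) :
          (Fin m → ℝ) × (Fin p → ℝ))‖ := by
      refine le_trans (infDist_le_dist_of_mem hq₀K) ?_
      rw [dist_eq_norm]
      have heq : ((b, d) : (Fin m → ℝ) × (Fin p → ℝ)) - (A.mulVec u, C.mulVec u + s₀)
          = -((A.mulVec u - b, fun i => max (C.mulVec u i - d i) 0) :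
            (Fin m → ℝ) × (Fin p → ℝ)) := by
        refine Prod.ext ?_ ?_
        · show b - A.mulVec u = -(A.mulVec u - b)
          rw [neg_sub]
        · show d - (C.mulVec u + s₀) = -(fun i => max (C.mulVec u i - d i) 0)
          funext i
          simp only [Pi.sub_apply, Pi.add_apply, Pi.neg_apply, hs₀]
          rcases le_total (d i - C.mulVec u i) 0 with h | h
          · rw [max_eq_right h, max_eq_left (by linarith)]
            ring
          · rw [max_eq_left h, max_eq_right (by linarith)]
            ring
      rw [heq, norm_neg]
    exact mul_le_mul_of_nonneg_left hdist hHnn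
end
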